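/- arXiv:1409.7996 — 5 statements merged into one kernel-verified Lean document; each statement's English description precedes it below -/
import Mathlib

section
/- For a weakly decreasing sequence of integers λ = (λ_1 ≥ … ≥ λ_n), the Schur polynomial s_λ(x_1,…,x_n) equals the sum over all Gelfand–Tsetlin patterns A with top row λ of the monomials x_1^{μ_1(A)} ⋯ x_n^{μ_n(A)}, where μ_i(A) = Σ_j A_{i-1,j} − Σ_j A_{i,j} (with the convention A_{n,j} = 0). -/
open scoped BigOperators Classical

/-- Index type for Gelfand–Tsetlin pattern positions: (row, column), 0-based. -/
abbrev GTIdx (n : ℕ) := Fin n × Fin n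

/-- A position (i,j) is a valid pattern position iff i + j < n (row i has columns 0..n-1-i). -/
def GTValid (n : ℕ) (p : GTIdx n) : Prop := (p.1 : ℕ) + (p.2 : ℕ) < n

/-- Entry of a real point at natural-number coordinates (0 outside the index range). -/
noncomputable def entryR {n : ℕ} (A : GTIdx n → ℝ) (i j : ℕ) : ℝ :=
  if h : i < n ∧ j < n then A (⟨i, h.1⟩, ⟨j, h.2⟩) else 0

/-- Entry of an integer point at natural-number coordinates (0 outside the index range). -/
def entryZ {n : ℕ} (A : GTIdx n → ℤ) (i j : ℕ) : ℤ :=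
  if h : i < n ∧ j < n then A (⟨i, h.1⟩, ⟨j, h.2⟩) else 0

/-- The Gelfand–Tsetlin polytope of λ: top row equal to λ, interlacing inequalities,
and (as a normalization embedding it in a finite-dimensional space) zero at invalid positions. -/
def GTPoly (n : ℕ) (lam : Fin n → ℝ) : Set (GTIdx n → ℝ) :=
  {A | (∀ j : Fin n, entryR A 0 j = lam j)
    ∧ (∀ i j : ℕ, i + 1 + j < n →
        entryR A (i+1) j ≤ entryR A i j ∧ entryR A i (j+1) ≤ entryR A (i+1) j)
    ∧ (∀ p : GTIdx n, ¬ GTValid n p → A p = 0)}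

/-- Integer Gelfand–Tsetlin patterns with top row λ. -/
def GTPat (n : ℕ) (lam : Fin n → ℤ) : Set (GTIdx n → ℤ) :=
  {A | (∀ j : Fin n, entryZ A 0 j = lam j)
    ∧ (∀ i j : ℕ, i + 1 + j < n →
        entryZ A (i+1) j ≤ entryZ A i j ∧ entryZ A i (j+1) ≤ entryZ A (i+1) j)
    ∧ (∀ p : GTIdx n, ¬ GTValid n p → A p = 0)}

/-- The weight of a pattern: μ_i = (sum of row i-1) - (sum of row i), 1-based;
here `i : Fin n` is 0-based, so `wtZ A i = (row i sum) - (row (i+1) sum)`. -/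
def wtZ {n : ℕ} (A : GTIdx n → ℤ) (i : Fin n) : ℤ :=
  (∑ j : Fin n, entryZ A i j) - ∑ j : Fin n, entryZ A ((i : ℕ) + 1) j

noncomputable def wtR {n : ℕ} (A : GTIdx n → ℝ) (i : Fin n) : ℝ :=
  (∑ j : Fin n, entryR A i j) - ∑ j : Fin n, entryR A ((i : ℕ) + 1) j

/-- Multiset of entries of row i. -/
noncomputable def rowM {n : ℕ} (A : GTIdx n → ℝ) (i : ℕ) : Multiset ℝ :=
  (Finset.univ.filter (fun j : Fin n => i + (j : ℕ) < n)).val.map (fun j => entryR A i (j : ℕ))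

/-- Valid pattern positions (the nodes of the ambient graph T). -/
abbrev GTNode (n : ℕ) := {p : GTIdx n // GTValid n p}

/-- `upEdge n p q` : q is an upper neighbour of p in the triangular graph T,
i.e. q = (i-1, j) or (i-1, j+1) where p = (i, j). -/
def upEdge (n : ℕ) (p q : GTIdx n) : Prop :=
  GTValid n p ∧ GTValid n q ∧ (q.1 : ℕ) + 1 = (p.1 : ℕ) ∧
    ((q.2 : ℕ) = (p.2 : ℕ) ∨ (q.2 : ℕ) = (p.2 : ℕ) + 1)

/-- The equality graph Γ_v of a point v of the GT polytope: nodes are valid positions,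
edges join a position to an upper neighbour carrying an equal entry. -/
def Gamma (n : ℕ) (A : GTIdx n → ℝ) : SimpleGraph (GTNode n) where
  Adj p q := (upEdge n p.1 q.1 ∨ upEdge n q.1 p.1) ∧ A p.1 = A q.1
  symm := by
    constructor
    rintro p q ⟨h, e⟩
    exact ⟨h.symm, e.symm⟩
  loopless := by
    constructor
    rintro p ⟨h | h, _⟩ <;> exact absurd h.2.2.1 (by omega)

/-- Tangent cone of a convex set P at a point v. -/
def tangentCone {E : Type*} [AddCommGroup E] [Module ℝ E] (P : Set E) (v : E) : Set E :=
  {y | ∃ x ∈ P, ∃ t : ℝ, 0 ≤ t ∧ y = v + t • (x - v)}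

/-- The ray from v in direction ε. -/
def raySet {E : Type*} [AddCommGroup E] [Module ℝ E] (v ε : E) : Set E :=
  {y | ∃ t : ℝ, 0 ≤ t ∧ y = v + t • ε}

/-- ε is the direction of an edge (one-dimensional extreme face) of the cone C with apex v. -/
def IsEdgeDir {E : Type*} [AddCommGroup E] [Module ℝ E] (C : Set E) (v ε : E) : Prop :=
  ε ≠ 0 ∧ IsExtreme ℝ C (raySet v ε)

/-- Direction-vector pattern for edges at a simplicial vertex: all nonzero coordinates lie
in rows a..b, one per row, and all are equal to c. -/
def simpDir (n : ℕ) (a b : ℕ) (c : ℝ) (ε : GTIdx n → ℝ) : Prop :=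
  (∀ p : GTIdx n, ε p ≠ 0 → GTValid n p ∧ a ≤ (p.1 : ℕ) ∧ (p.1 : ℕ) ≤ b)
  ∧ (∀ r : ℕ, a ≤ r → r ≤ b → ∃! p : GTIdx n, (p.1 : ℕ) = r ∧ ε p ≠ 0)
  ∧ (∀ p : GTIdx n, ε p ≠ 0 → ε p = c)

/-- A simplicial vertex: a vertex (extreme point) of the GT polytope whose equality graph
is acyclic. -/
def IsSimpVertex (n : ℕ) (lam : Fin n → ℝ) (A : GTIdx n → ℝ) : Prop :=
  A ∈ Set.extremePoints ℝ (GTPoly n lam) ∧ (Gamma n A).IsAcyclic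

/- ### Rational functions, integer-point transforms, and the specialization F -/

/-- Field of rational functions in variables indexed by ι. -/
abbrev KK (ι : Type) := FractionRing (MvPolynomial ι ℚ)

/-- The monomial t^u, u ∈ ℤ^ι, inside the rational function field. -/
noncomputable def tmon (ι : Type) [Fintype ι] (u : ι → ℤ) : KK ι :=
  ∏ i, (algebraMap (MvPolynomial ι ℚ) (KK ι) (MvPolynomial.X i)) ^ (u i)

/-- Indicator (as coefficient function of a formal Laurent series) of the integer points of S. -/
noncomputable def indSet {ι : Type} (S : Set (ι → ℝ)) : (ι → ℤ) → ℚ :=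
  fun a => if (fun i => (a i : ℝ)) ∈ S then 1 else 0

/-- `Represents r f` : the rational function r is the integer-point transform of the formal
Laurent series with coefficient function f, i.e. there is a nonzero Laurent polynomial q such
that q·f is a (finitely supported) Laurent polynomial g and r·q = g as rational functions. -/
noncomputable def Represents {ι : Type} [Fintype ι] (r : KK ι) (f : (ι → ℤ) → ℚ) : Prop :=
  ∃ q : (ι → ℤ) →₀ ℚ, q ≠ 0 ∧ ∃ g : (ι → ℤ) →₀ ℚ,
    (∀ a, g a = ∑ b ∈ q.support, q b * f (a - b)) ∧
    r * (∑ b ∈ q.support, (q b : KK ι) * tmon ι b)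
      = ∑ a ∈ g.support, (g a : KK ι) * tmon ι a

/-- Field of rational functions in x_1, ..., x_n. -/
abbrev Kx (n : ℕ) := FractionRing (MvPolynomial (Fin n) ℚ)

/-- The variable x_i. -/
noncomputable def xv (n : ℕ) (i : Fin n) : Kx n :=
  algebraMap (MvPolynomial (Fin n) ℚ) (Kx n) (MvPolynomial.X i)

/-- The substitution underlying F: t_{0,j} ↦ x_1 and t_{i,j} ↦ x_i⁻¹ x_{i+1} for i ≥ 1
(1-based x's; in our 0-based indexing t_{i,·} ↦ x_{i-1}⁻¹ · x_i for i ≥ 1, t_{0,·} ↦ x_0). -/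
noncomputable def xsub (n : ℕ) (p : GTIdx n) : Kx n :=
  if (p.1 : ℕ) = 0 then xv n p.1
  else (xv n (⟨(p.1 : ℕ) - 1, Nat.lt_of_le_of_lt (Nat.sub_le _ _) p.1.isLt⟩ : Fin n))⁻¹ * xv n p.1

/-- The specialization F on Laurent polynomials, as a ring homomorphism. -/
noncomputable def phiF (n : ℕ) : MvPolynomial (GTIdx n) ℚ →+* Kx n :=
  MvPolynomial.eval₂Hom (Rat.castHom (Kx n)) (xsub n)

/-- `FSpec n r y` : the specialization F of the rational function r (in the t-variables)
is defined and equal to y; i.e. r = p/q with F(q) ≠ 0 and y = F(p)/F(q). -/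
noncomputable def FSpec (n : ℕ) (r : KK (GTIdx n)) (y : Kx n) : Prop :=
  ∃ p q : MvPolynomial (GTIdx n) ℚ, phiF n q ≠ 0 ∧
    r * algebraMap (MvPolynomial (GTIdx n) ℚ) (KK (GTIdx n)) q
      = algebraMap (MvPolynomial (GTIdx n) ℚ) (KK (GTIdx n)) p ∧
    y * phiF n q = phiF n p

/-- The monomial e^μ = x^μ for an integral weight μ. -/
noncomputable def emon {n : ℕ} (mu : Fin n → ℤ) : Kx n := ∏ i, xv n i ^ mu i

/-- ρ = (n-1, n-2, ..., 0). -/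
def rhoW (n : ℕ) (i : Fin n) : ℤ := (n : ℤ) - 1 - (i : ℤ)

/-- The Schur (Laurent) polynomial of λ, defined by Weyl's character formula
(bialternant form). -/
noncomputable def schur (n : ℕ) (lam : Fin n → ℤ) : Kx n :=
  (∑ w : Equiv.Perm (Fin n), ((Equiv.Perm.sign w : ℤ) : Kx n)
      * ∏ i, xv n i ^ (lam (w⁻¹ i) + rhoW n (w⁻¹ i)))
  / (∑ w : Equiv.Perm (Fin n), ((Equiv.Perm.sign w : ℤ) : Kx n)
      * ∏ i, xv n i ^ (rhoW n (w⁻¹ i)))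

/-- The summand w(e^λ / Π_{i<j} (1 - x_j/x_i)) of Weyl's character formula. -/
noncomputable def weylTerm (n : ℕ) (lam : Fin n → ℤ) (w : Equiv.Perm (Fin n)) : Kx n :=
  (∏ i, xv n (w i) ^ lam i)
    / ∏ p ∈ Finset.univ.filter (fun p : Fin n × Fin n => p.1 < p.2),
        (1 - xv n (w p.2) / xv n (w p.1))

/-- Integer version of the edge-direction pattern. -/
def simpDirZ (n : ℕ) (a b : ℕ) (c : ℤ) (ε : GTIdx n → ℤ) : Prop :=
  (∀ p : GTIdx n, ε p ≠ 0 → GTValid n p ∧ a ≤ (p.1 : ℕ) ∧ (p.1 : ℕ) ≤ b)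
  ∧ (∀ r : ℕ, a ≤ r → r ≤ b → ∃! p : GTIdx n, (p.1 : ℕ) = r ∧ ε p ≠ 0)
  ∧ (∀ p : GTIdx n, ε p ≠ 0 → ε p = c)

/-- F(t^u): the specialization of the Laurent monomial t^u. -/
noncomputable def Fmon (n : ℕ) (u : GTIdx n → ℤ) : Kx n := ∏ p, xsub n p ^ u p

/-- A rational polytope in ℝ^m: a bounded set cut out by finitely many integral
linear inequalities. -/
def IsRatPolytope (m : ℕ) (P : Set (Fin m → ℝ)) : Prop :=
  Bornology.IsBounded P ∧ ∃ (k : ℕ) (a : Fin k → Fin m → ℤ) (b : Fin k → ℤ),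
    P = {x | ∀ i, ∑ j, (a i j : ℝ) * x j ≤ (b i : ℝ)}

/-- A rational polyhedron in ℝ^m. -/
def IsRatPolyhedron (m : ℕ) (P : Set (Fin m → ℝ)) : Prop :=
  ∃ (k : ℕ) (a : Fin k → Fin m → ℤ) (b : Fin k → ℤ),
    P = {x | ∀ i, ∑ j, (a i j : ℝ) * x j ≤ (b i : ℝ)}

/-- The cone C_Δ attached to a connected component Δ = c of the equality graph Γ_v:
vectors supported on the nodes of Δ, vanishing at the top (row-0) node of Δ, and
satisfying the interlacing inequalities along the edges of Δ. -/
noncomputable def compCone (n : ℕ) (A : GTIdx n → ℝ) (c : (Gamma n A).ConnectedComponent) :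
    Set (GTIdx n → ℝ) :=
  {x | (∀ p : GTIdx n,
          (¬ ∃ hp : GTValid n p, (Gamma n A).connectedComponentMk ⟨p, hp⟩ = c) → x p = 0)
    ∧ (∀ p : GTNode n, (Gamma n A).connectedComponentMk p = c → (p.1.1 : ℕ) = 0 → x p.1 = 0)
    ∧ (∀ p q : GTNode n, (Gamma n A).connectedComponentMk p = c →
        upEdge n p.1 q.1 → A p.1 = A q.1 →
        (((q.1.2 : ℕ) = (p.1.2 : ℕ)) → x p.1 ≤ x q.1) ∧
        (((q.1.2 : ℕ) = (p.1.2 : ℕ) + 1) → x q.1 ≤ x p.1))}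

section Dev

open Finset

/-- variable x_k, or 1 if out of range -/
noncomputable def Xo (n k : ℕ) : Kx n := if h : k < n then xv n ⟨k, h⟩ else 1

lemma xv_ne_zero (n : ℕ) (i : Fin n) : xv n i ≠ 0 := by
  unfold xv
  intro h
  have := (map_eq_zero_iff _ (IsFractionRing.injective (MvPolynomial (Fin n) ℚ) (Kx n))).mp h
  exact MvPolynomial.X_ne_zero i this

lemma Xo_ne_zero (n k : ℕ) : Xo n k ≠ 0 := by
  unfold Xo; split
  · exact xv_ne_zero n _
  · exact one_ne_zero

lemma xv_injective (n : ℕ) : Function.Injective (xv n) := by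
  intro i j h
  unfold xv at h
  exact MvPolynomial.X_injective ((IsFractionRing.injective (MvPolynomial (Fin n) ℚ) (Kx n)) h)

lemma Xo_ne (n k l : ℕ) (hk : k < n) (hl : l < n) (hkl : k ≠ l) : Xo n k ≠ Xo n l := by
  unfold Xo
  rw [dif_pos hk, dif_pos hl]
  intro h
  exact hkl (Fin.mk.injEq .. ▸ (xv_injective n h))

/-- sum of row i -/
def rowZ (n : ℕ) (A : GTIdx n → ℤ) (i : ℕ) : ℤ := ∑ j ∈ Finset.range n, entryZ A i j

/-- weight monomial for rows k..n-1 -/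
noncomputable def fwt (n k : ℕ) (A : GTIdx n → ℤ) : Kx n :=
  ∏ i ∈ Finset.Ico k n, Xo n i ^ (rowZ n A i - rowZ n A (i+1))

/-- partial patterns on rows k..n-1 with row k equal to μ -/
def PatSet (n k : ℕ) (μ : ℕ → ℤ) : Set (GTIdx n → ℤ) :=
  {A | (∀ j : ℕ, j < n - k → entryZ A k j = μ j)
    ∧ (∀ i j : ℕ, k ≤ i → i + 1 + j < n →
        entryZ A (i+1) j ≤ entryZ A i j ∧ entryZ A i (j+1) ≤ entryZ A (i+1) j)
    ∧ (∀ p : GTIdx n, ((p.1 : ℕ) < k ∨ ¬ GTValid n p) → A p = 0)}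

/-- the alternant determinant with m variables starting at offset k -/
noncomputable def altN (n k m : ℕ) (μ : ℕ → ℤ) : Kx n :=
  (Matrix.of fun i j : Fin m => Xo n (k + i) ^ (μ j + ((m : ℤ) - 1 - (j : ℕ)))).det

lemma entryZ_eq (n : ℕ) (A : GTIdx n → ℤ) (i j : ℕ) (hi : i < n) (hj : j < n) :
    entryZ A i j = A (⟨i, hi⟩, ⟨j, hj⟩) := by
  unfold entryZ; rw [dif_pos ⟨hi, hj⟩]

lemma entryZ_zero_of_ge (n : ℕ) (A : GTIdx n → ℤ) (i j : ℕ) (h : ¬ (i < n ∧ j < n)) :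
    entryZ A i j = 0 := by
  unfold entryZ; rw [dif_neg h]

end Dev
section Dev2
open Finset

lemma tele_aux {K : Type*} [AddCommGroup K] (g : ℤ → K) :
    ∀ (N : ℕ) (a : ℤ), ∑ t ∈ Finset.Icc a (a + N - 1), (g t - g (t+1)) = g a - g (a + N) := by
  intro N
  induction N with
  | zero => intro a; rw [Finset.Icc_eq_empty (by omega)]; simp
  | succ N ih =>
    intro a
    have h1 : Finset.Icc a (a + (N+1 : ℕ) - 1) = insert a (Finset.Icc (a+1) (a + 1 + N - 1)) := by
      ext t; simp only [Finset.mem_Icc, Finset.mem_insert]; omega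
    rw [h1, Finset.sum_insert (by simp only [Finset.mem_Icc]; omega), ih (a+1)]
    have : a + 1 + (N : ℤ) = a + ((N : ℕ) + 1 : ℕ) := by push_cast; ring
    rw [this]; abel

lemma tele_sum {K : Type*} [AddCommGroup K] (g : ℤ → K) (a b : ℤ) (hab : a ≤ b + 1) :
    ∑ t ∈ Finset.Icc a b, (g t - g (t+1)) = g a - g (b+1) := by
  have hN : b = a + ((b + 1 - a).toNat : ℤ) - 1 := by omega
  have := tele_aux g (b + 1 - a).toNat a
  rw [← hN] at this
  rw [this, show a + ((b + 1 - a).toNat : ℤ) = b + 1 by omega]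

/-- key telescoping identity for entries -/
lemma tele_entry {K : Type*} [Field K] (x y : K) (hx : x ≠ 0) (hy : y ≠ 0) (a b e : ℤ)
    (hab : a ≤ b + 1) :
    (x - y) * ∑ t ∈ Finset.Icc a b, x ^ (-t) * y ^ (t + e)
      = x ^ (1 - a) * y ^ (a + e) - x ^ (-b) * y ^ (b + 1 + e) := by
  set g : ℤ → K := fun t => x ^ (1 - t) * y ^ (t + e) with hg
  have key : ∀ t : ℤ, (x - y) * (x ^ (-t) * y ^ (t + e)) = g t - g (t+1) := by
    intro t
    have h1 : x * (x ^ (-t) * y ^ (t+e)) = g t := by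
      rw [hg]; simp only []
      rw [show (1 : ℤ) - t = 1 + (-t) by ring, zpow_add₀ hx, zpow_one]; ring
    have h2 : y * (x ^ (-t) * y ^ (t+e)) = g (t+1) := by
      rw [hg]; simp only []
      rw [show (1:ℤ) - (t+1) = -t by ring, show t + 1 + e = (t + e) + 1 by ring,
        zpow_add_one₀ hy]; ring
    rw [sub_mul, h1, h2]
  rw [Finset.mul_sum, Finset.sum_congr rfl (fun t _ => key t), tele_sum g a b hab]
  rw [hg]
  simp only []
  rw [show (1:ℤ) - (b+1) = -b by ring]
end Dev2
section Dev3
open Finset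

lemma sel_classify (m : ℕ) (r : Fin m → Fin (m+1))
    (hc : ∀ j : Fin m, r j = j.succ ∨ r j = j.castSucc)
    (hinj : Function.Injective r) :
    ∃ k : Fin (m+1), r = Fin.succAbove k := by
  by_cases hS : ∃ t : ℕ, ∃ h : t < m, (r ⟨t, h⟩ : ℕ) = t + 1
  · classical
    let k0 := Nat.find hS
    have hk0 : ∃ h : k0 < m, (r ⟨k0, h⟩ : ℕ) = k0 + 1 := Nat.find_spec hS
    obtain ⟨hk0m, hk0v⟩ := hk0
    have hmin : ∀ t (h : t < m), t < k0 → (r ⟨t, h⟩ : ℕ) = t := by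
      intro t h ht
      rcases hc ⟨t, h⟩ with h1 | h1
      · exfalso
        exact Nat.find_min hS ht ⟨h, by rw [h1]; simp [Fin.val_succ]⟩
      · rw [h1]; simp
    have key : ∀ t (h : t < m), k0 ≤ t → (r ⟨t, h⟩ : ℕ) = t + 1 := by
      intro t
      induction t with
      | zero =>
        intro h h0
        have e : (⟨0, h⟩ : Fin m) = ⟨k0, hk0m⟩ := by
          simp only [Fin.mk.injEq]; omega
        rw [e, hk0v]; omega
      | succ t ih =>
        intro h hle
        rcases Nat.lt_or_ge t k0 with h1 | h1
        · have e : (⟨t+1, h⟩ : Fin m) = ⟨k0, hk0m⟩ := by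
            simp only [Fin.mk.injEq]; omega
          rw [e, hk0v]; omega
        · have ht : t < m := by omega
          have hrt := ih ht h1
          rcases hc ⟨t+1, h⟩ with h2 | h2
          · rw [h2]; simp [Fin.val_succ]
          · exfalso
            have : (r ⟨t+1, h⟩ : ℕ) = t + 1 := by rw [h2]; simp
            have heq : r ⟨t+1, h⟩ = r ⟨t, ht⟩ := Fin.val_injective (by rw [this, hrt])
            have := hinj heq
            simp only [Fin.mk.injEq] at this
            omega
    refine ⟨⟨k0, by omega⟩, funext fun j => Fin.val_injective ?_⟩
    rcases Nat.lt_or_ge (j : ℕ) k0 with h1 | h1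
    · rw [Fin.succAbove_of_castSucc_lt _ _ (by simpa [Fin.lt_def] using h1)]
      simpa using hmin j j.isLt h1
    · rw [Fin.succAbove_of_le_castSucc _ _ (by simpa [Fin.le_def] using h1)]
      simpa [Fin.val_succ] using key j j.isLt h1
  · push_neg at hS
    refine ⟨Fin.last m, funext fun j => ?_⟩
    rcases hc j with h1 | h1
    · exfalso; exact hS j j.isLt (by rw [h1]; simp [Fin.val_succ])
    · rw [h1, Fin.succAbove_last]

lemma det_bidiag {K : Type*} [Field K] (m : ℕ) (v : Fin (m+1) → (Fin m → K)) (α β : Fin m → K) :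
    Matrix.det (Matrix.of fun j i : Fin m => α j * v j.succ i - β j * v j.castSucc i)
      = ∑ k : Fin (m+1),
          ((∏ j ∈ Finset.univ.filter (fun j : Fin m => (j : ℕ) < (k : ℕ)), (-β j)) *
           ∏ j ∈ Finset.univ.filter (fun j : Fin m => ¬ (j : ℕ) < (k : ℕ)), α j) *
          Matrix.det (Matrix.of fun j i : Fin m => v (k.succAbove j) i) := by
  classical
  set f := (Matrix.detRowAlternating : (Fin m → K) [⋀^Fin m]→ₗ[K] K) with hf
  set coef : Fin m → Fin (m+1) → K := fun j c =>
    if c = j.succ then α j else if c = j.castSucc then -β j else 0 with hcoef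
  have hrow : ∀ j : Fin m,
      (fun i => α j * v j.succ i - β j * v j.castSucc i) = ∑ c : Fin (m+1), coef j c • v c := by
    intro j
    have hne : (j.succ : Fin (m+1)) ≠ j.castSucc := by
      intro h
      have := congrArg Fin.val h
      simp [Fin.val_succ] at this
    have : ∀ c : Fin (m+1), coef j c • v c
        = (if c = j.succ then α j • v j.succ else 0)
          + (if c = j.castSucc then (-β j) • v j.castSucc else 0) := by
      intro c
      by_cases h1 : c = j.succ
      · subst h1; rw [if_pos rfl, if_neg hne, hcoef]; simp
      · by_cases h2 : c = j.castSucc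
        · subst h2; rw [if_neg h1, if_pos rfl, hcoef]; simp [h1]
        · rw [if_neg h1, if_neg h2, hcoef]; simp [h1, h2]
    rw [Finset.sum_congr rfl (fun c _ => this c), Finset.sum_add_distrib,
      Finset.sum_ite_eq' Finset.univ (j.succ), Finset.sum_ite_eq' Finset.univ (j.castSucc)]
    simp only [Finset.mem_univ, if_pos]
    funext i
    simp [sub_eq_add_neg]
  have hdet : Matrix.det (Matrix.of fun j i : Fin m => α j * v j.succ i - β j * v j.castSucc i)
      = f (fun j => ∑ c : Fin (m+1), coef j c • v c) := by
    rw [hf]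
    congr 1
    funext j
    exact hrow j
  have hsum : (f fun j => ∑ c : Fin (m+1), coef j c • v c)
      = ∑ r : Fin m → Fin (m+1), f fun j => coef j (r j) • v (r j) :=
    f.toMultilinearMap.map_sum (fun j c => coef j c • v c)
  have hterm : ∀ r : Fin m → Fin (m+1),
      (f fun j => coef j (r j) • v (r j)) = (∏ j, coef j (r j)) • f (fun j => v (r j)) :=
    fun r => f.toMultilinearMap.map_smul_univ (fun j => coef j (r j)) (fun j => v (r j))
  rw [hdet, hsum, Finset.sum_congr rfl (fun r _ => hterm r)]
  set T : (Fin m → Fin (m+1)) → K := fun r => (∏ j, coef j (r j)) • f (fun j => v (r j)) with hT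
  have hvanish : ∀ r : Fin m → Fin (m+1), (¬ ∃ k : Fin (m+1), r = Fin.succAbove k) → T r = 0 := by
    intro r hr
    by_cases hc' : ∀ j : Fin m, r j = j.succ ∨ r j = j.castSucc
    · by_cases hinj : Function.Injective r
      · exact absurd (sel_classify m r hc' hinj) hr
      · obtain ⟨j1, j2, hval, hne⟩ := Function.not_injective_iff.mp hinj
        have : f (fun j => v (r j)) = 0 :=
          f.map_eq_zero_of_eq (fun j => v (r j)) (congrArg v hval) hne
        rw [hT]; simp only [this, smul_zero]
    · push_neg at hc'
      obtain ⟨j, hj1, hj2⟩ := hc'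
      have hz0 : coef j (r j) = 0 := by rw [hcoef]; simp [hj1, hj2]
      have hz : (∏ j : Fin m, coef j (r j)) = 0 := Finset.prod_eq_zero (Finset.mem_univ j) hz0
      rw [hT]
      simp only [hz, zero_smul]
  have himg1 : ∑ r ∈ Finset.univ.image (fun k : Fin (m+1) => Fin.succAbove k), T r
      = ∑ k : Fin (m+1), T (Fin.succAbove k) :=
    Finset.sum_image (fun x _ y _ h => Fin.succAbove_left_injective h)
  have himg : ∑ r : Fin m → Fin (m+1), T r
      = ∑ k : Fin (m+1), T (Fin.succAbove k) := by
    rw [← himg1]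
    refine (Finset.sum_subset (Finset.subset_univ _) (fun r _ hr => hvanish r ?_)).symm
    simp only [Finset.mem_image, Finset.mem_univ, true_and] at hr
    rintro ⟨k, hk⟩
    exact hr ⟨k, hk.symm⟩
  rw [himg]
  refine Finset.sum_congr rfl (fun k _ => ?_)
  have hcoefval : ∀ j : Fin m, coef j (k.succAbove j)
      = if (j : ℕ) < (k : ℕ) then -β j else α j := by
    intro j
    by_cases h : (j : ℕ) < (k : ℕ)
    · rw [Fin.succAbove_of_castSucc_lt _ _ (by simpa [Fin.lt_def] using h), if_pos h, hcoef]
      simp only []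
      rw [if_neg (by intro hh; have := congrArg Fin.val hh; simp [Fin.val_succ] at this)]
      simp
    · rw [Fin.succAbove_of_le_castSucc _ _ (by simpa [Fin.le_def] using not_lt.mp h),
        if_neg h, hcoef]
      simp
  have hprod : (∏ j, coef j (k.succAbove j))
      = (∏ j ∈ Finset.univ.filter (fun j : Fin m => (j : ℕ) < (k : ℕ)), (-β j)) *
        ∏ j ∈ Finset.univ.filter (fun j : Fin m => ¬ (j : ℕ) < (k : ℕ)), α j := by
    rw [Finset.prod_congr rfl (fun j _ => hcoefval j), Finset.prod_ite]
  have hdetk : f (fun j => v (k.succAbove j))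
      = Matrix.det (Matrix.of fun j i : Fin m => v (k.succAbove j) i) := rfl
  rw [hT]
  simp only []
  rw [hprod, hdetk, smul_eq_mul]
end Dev3
section Dev4
open Finset

lemma zpow_fs {K : Type*} [Field K] {x : K} (hx : x ≠ 0) {α : Type*} (s : Finset α) (f : α → ℤ) :
    x ^ (∑ i ∈ s, f i) = ∏ i ∈ s, x ^ f i := by
  classical
  induction s using Finset.induction with
  | empty => simp
  | insert _ _ hns ih => rw [Finset.sum_insert hns, Finset.prod_insert hns, zpow_add₀ hx, ih]

/-- extension of a Fin-indexed tuple by zero -/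
def extZ (m : ℕ) (ν : Fin m → ℤ) : ℕ → ℤ := fun j => if h : j < m then ν ⟨j, h⟩ else 0

lemma extZ_coe (m : ℕ) (ν : Fin m → ℤ) (j : Fin m) : extZ m ν (j : ℕ) = ν j := by
  unfold extZ; rw [dif_pos j.isLt]

lemma branch_step1 (n k m : ℕ) (μ : ℕ → ℤ) :
    ∑ ν ∈ Fintype.piFinset (fun j : Fin m => Finset.Icc (μ ((j:ℕ)+1)) (μ (j:ℕ))),
        (Xo n k) ^ (- ∑ j : Fin m, ν j) * altN n (k+1) m (extZ m ν)
      = (Matrix.of fun j i : Fin m => ∑ t ∈ Finset.Icc (μ ((j:ℕ)+1)) (μ (j:ℕ)),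
          (Xo n k) ^ (-t) * (Xo n (k+1+(i:ℕ))) ^ (t + ((m:ℤ) - 1 - (j:ℕ)))).det := by
  classical
  set x := Xo n k with hxdef
  have hx : x ≠ 0 := Xo_ne_zero n k
  set f := (Matrix.detRowAlternating : (Fin m → Kx n) [⋀^Fin m]→ₗ[Kx n] Kx n) with hf
  set g : Fin m → ℤ → (Fin m → Kx n) :=
    fun j t => fun i => x ^ (-t) * (Xo n (k+1+(i:ℕ))) ^ (t + ((m:ℤ) - 1 - (j:ℕ))) with hg
  set A : Fin m → Finset ℤ := fun j => Finset.Icc (μ ((j:ℕ)+1)) (μ (j:ℕ)) with hA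
  have hrows : (Matrix.of fun j i : Fin m => ∑ t ∈ A j,
      x ^ (-t) * (Xo n (k+1+(i:ℕ))) ^ (t + ((m:ℤ) - 1 - (j:ℕ)))) = fun j => ∑ t ∈ A j, g j t := by
    funext j i
    rw [Finset.sum_apply]
    rfl
  have hdet0 : (Matrix.of fun j i : Fin m => ∑ t ∈ A j,
      x ^ (-t) * (Xo n (k+1+(i:ℕ))) ^ (t + ((m:ℤ) - 1 - (j:ℕ)))).det
      = f (fun j => ∑ t ∈ A j, g j t) := by
    rw [← hrows]
    rfl
  have hms : (f fun j => ∑ t ∈ A j, g j t) = ∑ r ∈ Fintype.piFinset A, f fun j => g j (r j) :=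
    f.toMultilinearMap.map_sum_finset g A
  have hterm : ∀ r : Fin m → ℤ, (f fun j => g j (r j))
      = x ^ (- ∑ j : Fin m, r j) * altN n (k+1) m (extZ m r) := by
    intro r
    have hsm : (fun j => g j (r j)) = fun j => (x ^ (-(r j))) •
        (fun i : Fin m => (Xo n (k+1+(i:ℕ))) ^ (r j + ((m:ℤ) - 1 - (j:ℕ)))) := by
      funext j i; simp [hg, smul_eq_mul]
    have hsmul : (f fun j => (x ^ (-(r j))) •
        fun i : Fin m => (Xo n (k+1+(i:ℕ))) ^ (r j + ((m:ℤ) - 1 - (j:ℕ))))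
        = (∏ j : Fin m, x ^ (-(r j))) • f (fun j =>
            fun i : Fin m => (Xo n (k+1+(i:ℕ))) ^ (r j + ((m:ℤ) - 1 - (j:ℕ)))) :=
      f.toMultilinearMap.map_smul_univ _ _
    rw [hsm, hsmul]
    have h1 : (∏ j : Fin m, x ^ (-(r j))) = x ^ (- ∑ j : Fin m, r j) := by
      rw [← zpow_fs hx, ← Finset.sum_neg_distrib]
    have h2 : f (fun j => fun i : Fin m => (Xo n (k+1+(i:ℕ))) ^ (r j + ((m:ℤ) - 1 - (j:ℕ))))
        = altN n (k+1) m (extZ m r) := by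
      have e1 : f (fun j => fun i : Fin m => (Xo n (k+1+(i:ℕ))) ^ (r j + ((m:ℤ) - 1 - (j:ℕ))))
          = (Matrix.of fun j i : Fin m =>
              (Xo n (k+1+(i:ℕ))) ^ (r j + ((m:ℤ) - 1 - (j:ℕ)))).det := rfl
      rw [e1, ← Matrix.det_transpose]
      unfold altN
      congr 1
      funext i j
      rw [Matrix.transpose_apply]
      simp only [Matrix.of_apply]
      rw [extZ_coe]
    rw [h1, h2, smul_eq_mul]
  rw [hdet0, hms]
  exact (Finset.sum_congr rfl (fun r _ => hterm r)).symm
end Dev4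
section Dev5
open Finset

lemma prod_filter_lt {K : Type*} [CommMonoid K] (m c : ℕ) (F : ℕ → K) :
    ∏ j ∈ Finset.univ.filter (fun j : Fin m => (j:ℕ) < c), F (j:ℕ)
      = ∏ j ∈ Finset.range (min c m), F j := by
  rw [Finset.prod_filter]
  rw [Fin.prod_univ_eq_prod_range (fun j => if j < c then F j else 1) m]
  rw [← Finset.prod_filter]
  congr 1
  ext t
  simp only [Finset.mem_filter, Finset.mem_range, Finset.mem_inter]
  omega

lemma prod_filter_ge {K : Type*} [CommMonoid K] (m c : ℕ) (F : ℕ → K) :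
    ∏ j ∈ Finset.univ.filter (fun j : Fin m => ¬ (j:ℕ) < c), F (j:ℕ)
      = ∏ j ∈ Finset.Ico c m, F j := by
  rw [Finset.prod_filter]
  rw [Fin.prod_univ_eq_prod_range (fun j => if ¬ j < c then F j else 1) m]
  rw [← Finset.prod_filter]
  congr 1
  ext t
  simp only [Finset.mem_filter, Finset.mem_range, Finset.mem_Ico]
  omega

lemma zpow_congr (n : ℕ) (a b : ℕ) (e e' : ℤ) (ha : a = b) (he : e = e') :
    Xo n a ^ e = Xo n b ^ e' := by rw [ha, he]

lemma branch_step4 (n k m : ℕ) (μ : ℕ → ℤ) :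
    altN n k (m+1) μ = ∑ c : Fin (m+1),
      (-1 : Kx n) ^ (c : ℕ) * Xo n k ^ (μ (c:ℕ) + ((m:ℤ) - (c:ℕ)))
      * (Matrix.of fun i j : Fin m =>
          Xo n (k+1+(i:ℕ)) ^ (μ ((c.succAbove j : Fin (m+1)) : ℕ)
            + ((m:ℤ) - ((c.succAbove j : Fin (m+1)) : ℕ)))).det := by
  unfold altN
  rw [Matrix.det_succ_row_zero]
  refine Finset.sum_congr rfl (fun c _ => ?_)
  have hM0 : (Matrix.of fun i j : Fin (m+1) =>
      Xo n (k + (i:ℕ)) ^ (μ (j:ℕ) + (((m+1:ℕ):ℤ) - 1 - (j:ℕ)))) 0 c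
      = Xo n k ^ (μ (c:ℕ) + ((m:ℤ) - (c:ℕ))) := by
    simp only [Matrix.of_apply, Fin.val_zero]
    exact zpow_congr n _ _ _ _ (by omega) (by push_cast; try ring)
  have hsub : (Matrix.of fun i j : Fin (m+1) =>
        Xo n (k + (i:ℕ)) ^ (μ (j:ℕ) + (((m+1:ℕ):ℤ) - 1 - (j:ℕ)))).submatrix Fin.succ c.succAbove
      = Matrix.of (fun i j : Fin m => Xo n (k+1+(i:ℕ)) ^ (μ ((c.succAbove j : Fin (m+1)) : ℕ)
            + ((m:ℤ) - ((c.succAbove j : Fin (m+1)) : ℕ)))) := by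
    funext i j
    simp only [Matrix.submatrix_apply, Matrix.of_apply, Fin.val_succ]
    exact zpow_congr n _ _ _ _ (by omega) (by push_cast; try ring)
  rw [hM0, hsub]

lemma branching (n k m : ℕ) (μ : ℕ → ℤ) (hdec : ∀ j : ℕ, j + 1 ≤ m → μ (j+1) ≤ μ j) :
    altN n k (m+1) μ
      = (∑ ν ∈ Fintype.piFinset (fun j : Fin m => Finset.Icc (μ ((j:ℕ)+1)) (μ (j:ℕ))),
          Xo n k ^ ((∑ j ∈ Finset.range (m+1), μ j) - ∑ j : Fin m, ν j)
            * altN n (k+1) m (extZ m ν))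
        * ∏ i ∈ Finset.range m, (Xo n k - Xo n (k+1+i)) := by
  classical
  set x := Xo n k with hxd
  have hx : x ≠ 0 := Xo_ne_zero n k
  have hy : ∀ i : ℕ, Xo n (k+1+i) ≠ 0 := fun i => Xo_ne_zero n _
  set Sμ : ℤ := ∑ j ∈ Finset.range (m+1), μ j with hS
  set C : Matrix (Fin m) (Fin m) (Kx n) := Matrix.of fun j i : Fin m =>
      ∑ t ∈ Finset.Icc (μ ((j:ℕ)+1)) (μ (j:ℕ)),
        x ^ (-t) * (Xo n (k+1+(i:ℕ))) ^ (t + ((m:ℤ) - 1 - (j:ℕ))) with hC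
  set v : Fin (m+1) → Fin m → Kx n :=
    fun c i => Xo n (k+1+(i:ℕ)) ^ (μ (c:ℕ) + ((m:ℤ) - (c:ℕ))) with hv
  set α : Fin m → Kx n := fun j => x ^ (1 - μ ((j:ℕ)+1)) with hα
  set β : Fin m → Kx n := fun j => x ^ (-μ (j:ℕ)) with hβ
  -- step 1: the ν-sum is x^Sμ * det C
  have h1 : (∑ ν ∈ Fintype.piFinset (fun j : Fin m => Finset.Icc (μ ((j:ℕ)+1)) (μ (j:ℕ))),
        x ^ (Sμ - ∑ j : Fin m, ν j) * altN n (k+1) m (extZ m ν)) = x ^ Sμ * C.det := by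
    rw [hC, ← branch_step1 n k m μ, Finset.mul_sum]
    refine Finset.sum_congr rfl (fun ν _ => ?_)
    rw [← mul_assoc, ← zpow_add₀ hx]
    congr 2
  -- step 2: multiply rows by (x - y i)
  have h2 : (∏ i ∈ Finset.range m, (x - Xo n (k+1+i))) * C.det
      = (Matrix.of fun j i : Fin m => α j * v j.succ i - β j * v j.castSucc i).det := by
    have hmr : (Matrix.of fun j i : Fin m => (x - Xo n (k+1+(i:ℕ))) * C j i).det
        = (∏ i : Fin m, (x - Xo n (k+1+(i:ℕ)))) * C.det :=
      Matrix.det_mul_row (fun i : Fin m => (x - Xo n (k+1+(i:ℕ)))) C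
    have hpr : (∏ i : Fin m, (x - Xo n (k+1+(i:ℕ)))) = ∏ i ∈ Finset.range m, (x - Xo n (k+1+i)) :=
      Fin.prod_univ_eq_prod_range (fun i => x - Xo n (k+1+i)) m
    rw [← hpr, ← hmr]
    congr 1
    funext j i
    simp only [Matrix.of_apply, hC]
    rw [tele_entry x (Xo n (k+1+(i:ℕ))) hx (hy i) (μ ((j:ℕ)+1)) (μ (j:ℕ)) ((m:ℤ) - 1 - (j:ℕ))
      (by have := hdec (j:ℕ) (by omega); omega)]
    rw [hα, hβ, hv]
    simp only [Fin.val_succ, Fin.coe_castSucc]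
    congr 2
    · push_cast; ring
    · push_cast; ring
  -- step 3: det_bidiag
  have h3 := det_bidiag m v α β
  -- step 5: scalar identity
  have h5 : ∀ c : Fin (m+1),
      x ^ Sμ * ((∏ j ∈ Finset.univ.filter (fun j : Fin m => (j : ℕ) < (c : ℕ)), (-β j)) *
           ∏ j ∈ Finset.univ.filter (fun j : Fin m => ¬ (j : ℕ) < (c : ℕ)), α j)
      = (-1 : Kx n) ^ (c : ℕ) * x ^ (μ (c:ℕ) + ((m:ℤ) - (c:ℕ))) := by
    intro c
    have hc : (c : ℕ) ≤ m := by omega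
    have hmin : min (c : ℕ) m = (c : ℕ) := by omega
    have e1 : (∏ j ∈ Finset.univ.filter (fun j : Fin m => (j : ℕ) < (c : ℕ)), (-β j))
        = (-1 : Kx n) ^ (c : ℕ) * x ^ (- ∑ j ∈ Finset.range (c : ℕ), μ j) := by
      rw [hβ]
      have : ∀ j : Fin m, -(x ^ (-μ (j:ℕ))) = (-1 : Kx n) * x ^ (-μ (j:ℕ)) := fun j => by ring
      calc ∏ j ∈ Finset.univ.filter (fun j : Fin m => (j : ℕ) < (c : ℕ)), -(x ^ (-μ (j:ℕ)))
          = ∏ j ∈ Finset.range (min (c:ℕ) m), ((-1 : Kx n) * x ^ (-μ j)) := by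
            rw [← prod_filter_lt m (c:ℕ) (fun t => (-1 : Kx n) * x ^ (-μ t))]
            exact Finset.prod_congr rfl (fun j _ => this j)
        _ = (-1 : Kx n) ^ (c : ℕ) * x ^ (- ∑ j ∈ Finset.range (c : ℕ), μ j) := by
            rw [hmin, Finset.prod_mul_distrib, Finset.prod_const, Finset.card_range,
              ← zpow_fs hx, ← Finset.sum_neg_distrib]
    have e2 : (∏ j ∈ Finset.univ.filter (fun j : Fin m => ¬ (j : ℕ) < (c : ℕ)), α j)
        = x ^ (((m:ℤ) - (c:ℕ)) - ∑ j ∈ Finset.Ico ((c:ℕ)+1) (m+1), μ j) := by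
      rw [hα]
      calc ∏ j ∈ Finset.univ.filter (fun j : Fin m => ¬ (j : ℕ) < (c : ℕ)), x ^ (1 - μ ((j:ℕ)+1))
          = ∏ j ∈ Finset.Ico (c:ℕ) m, x ^ (1 - μ (j+1)) :=
            prod_filter_ge m (c:ℕ) (fun t => x ^ (1 - μ (t+1)))
        _ = x ^ (∑ j ∈ Finset.Ico (c:ℕ) m, (1 - μ (j+1))) := (zpow_fs hx _ _).symm
        _ = x ^ (((m:ℤ) - (c:ℕ)) - ∑ j ∈ Finset.Ico ((c:ℕ)+1) (m+1), μ j) := by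
            congr 1
            rw [Finset.sum_sub_distrib, Finset.sum_const, Finset.sum_Ico_add' μ (c:ℕ) m 1]
            simp only [nsmul_eq_mul, mul_one, Nat.card_Ico]
            push_cast [hc]
            ring
    rw [e1, e2]
    set A : ℤ := ∑ j ∈ Finset.range (c:ℕ), μ j with hA
    set B : ℤ := ∑ j ∈ Finset.Ico ((c:ℕ)+1) (m+1), μ j with hB
    have hsplit : Sμ = A + μ (c:ℕ) + B := by
      rw [hS, hA, hB, Finset.range_eq_Ico,
        ← Finset.sum_Ico_consecutive _ (Nat.zero_le (c:ℕ)) (by omega : (c:ℕ) ≤ m+1),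
        Finset.sum_eq_sum_Ico_succ_bot (by omega : (c:ℕ) < m+1)]
      simp only [Finset.range_eq_Ico]
      ring
    calc x ^ Sμ * ((-1 : Kx n) ^ (c:ℕ) * x ^ (-A) * x ^ ((m:ℤ) - (c:ℕ) - B))
        = (-1 : Kx n) ^ (c:ℕ) * (x ^ Sμ * x ^ (-A) * x ^ ((m:ℤ) - (c:ℕ) - B)) := by ring
      _ = (-1 : Kx n) ^ (c:ℕ) * x ^ (Sμ + -A + ((m:ℤ) - (c:ℕ) - B)) := by
          rw [← zpow_add₀ hx, ← zpow_add₀ hx]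
      _ = (-1 : Kx n) ^ (c:ℕ) * x ^ (μ (c:ℕ) + ((m:ℤ) - (c:ℕ))) := by
          rw [hsplit]; congr 2; ring
  -- assemble
  rw [branch_step4 n k m μ, h1]
  have hstep : (x ^ Sμ * C.det) * (∏ i ∈ Finset.range m, (x - Xo n (k+1+i)))
      = x ^ Sμ * ((∏ i ∈ Finset.range m, (x - Xo n (k+1+i))) * C.det) := by ring
  rw [hstep, h2, h3, Finset.mul_sum]
  refine Finset.sum_congr rfl (fun c _ => ?_)
  rw [← mul_assoc, h5 c, mul_assoc, mul_assoc]
  congr 2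
  rw [← Matrix.det_transpose]
  congr 1
end Dev5
section Dev6
open Finset

noncomputable def joinRow (n k : ℕ) (μ : ℕ → ℤ) (B : GTIdx n → ℤ) : GTIdx n → ℤ :=
  fun p => if (p.1 : ℕ) = k ∧ GTValid n p then μ (p.2 : ℕ) else B p

noncomputable def truncRow (n k : ℕ) (A : GTIdx n → ℤ) : GTIdx n → ℤ :=
  fun p => if (p.1 : ℕ) = k then 0 else A p

lemma entryZ_joinRow (n k : ℕ) (μ : ℕ → ℤ) (B : GTIdx n → ℤ) (i j : ℕ) :
    entryZ (joinRow n k μ B) i j = if i = k ∧ i + j < n then μ j else entryZ B i j := by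
  unfold entryZ joinRow
  by_cases h : i < n ∧ j < n
  · rw [dif_pos h, dif_pos h]
    by_cases hc : i = k ∧ i + j < n
    · rw [if_pos hc,
        if_pos (show ((⟨i, h.1⟩ : Fin n) : ℕ) = k ∧ GTValid n (⟨i, h.1⟩, ⟨j, h.2⟩) from
          ⟨hc.1, hc.2⟩)]
    · rw [if_neg (show ¬ (((⟨i, h.1⟩ : Fin n) : ℕ) = k ∧ GTValid n (⟨i, h.1⟩, ⟨j, h.2⟩)) from
          fun hh => hc ⟨hh.1, hh.2⟩), if_neg hc]
  · rw [dif_neg h, dif_neg h, if_neg (fun hc : i = k ∧ i + j < n => h ⟨by omega, by omega⟩)]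

lemma entryZ_truncRow (n k : ℕ) (A : GTIdx n → ℤ) (i j : ℕ) :
    entryZ (truncRow n k A) i j = if i = k then 0 else entryZ A i j := by
  unfold entryZ truncRow
  by_cases h : i < n ∧ j < n
  · simp only [dif_pos h]
    try rfl
  · simp only [dif_neg h]
    try split <;> rfl

lemma entryZ_zero_mem (n k' : ℕ) (ν' : ℕ → ℤ) (B : GTIdx n → ℤ) (hB : B ∈ PatSet n k' ν')
    (i j : ℕ) (h : i < k' ∨ n ≤ i + j) : entryZ B i j = 0 := by
  by_cases hin : i < n ∧ j < n
  · rw [entryZ_eq n B i j hin.1 hin.2]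
    refine hB.2.2 _ ?_
    rcases h with h | h
    · left; exact h
    · right; intro hv; unfold GTValid at hv; simp only at hv; omega
  · exact entryZ_zero_of_ge n B i j hin

lemma top_entry (n k : ℕ) (μ : ℕ → ℤ) (A : GTIdx n → ℤ) (hA : A ∈ PatSet n k μ) (j : ℕ)
    (hj : j < n - k) : entryZ A k j = μ j := hA.1 j hj

/-- row sum of the top row of a member of PatSet -/
lemma rowZ_top (n k m : ℕ) (hk : k + (m+1) = n) (μ : ℕ → ℤ) (A : GTIdx n → ℤ)
    (hA : A ∈ PatSet n k μ) : rowZ n A k = ∑ j ∈ Finset.range (m+1), μ j := by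
  unfold rowZ
  rw [← Finset.sum_subset (show Finset.range (m+1) ⊆ Finset.range n by
      intro t ht; simp only [Finset.mem_range] at *; omega)
    (fun x _ hx => entryZ_zero_mem n k μ A hA k x
      (by simp only [Finset.mem_range] at hx; omega))]
  refine Finset.sum_congr rfl (fun j hj => ?_)
  exact hA.1 j (by simp only [Finset.mem_range] at hj; omega)

lemma rowZ_join_ne (n k : ℕ) (μ : ℕ → ℤ) (B : GTIdx n → ℤ) (i : ℕ) (hi : i ≠ k) :
    rowZ n (joinRow n k μ B) i = rowZ n B i := by
  unfold rowZ
  refine Finset.sum_congr rfl (fun j _ => ?_)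
  rw [entryZ_joinRow, if_neg (fun hc => hi hc.1)]

lemma joinRow_mem (n k m : ℕ) (hk : k + (m+1) = n) (μ : ℕ → ℤ) (ν : Fin m → ℤ)
    (hν : ∀ j : Fin m, μ ((j:ℕ)+1) ≤ ν j ∧ ν j ≤ μ (j:ℕ))
    (B : GTIdx n → ℤ) (hB : B ∈ PatSet n (k+1) (extZ m ν)) :
    joinRow n k μ B ∈ PatSet n k μ := by
  have hBval : ∀ (j : ℕ) (hj : j < m), entryZ B (k+1) j = ν ⟨j, hj⟩ := by
    intro j hj
    have := hB.1 j (by omega)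
    rwa [extZ, dif_pos hj] at this
  refine ⟨?_, ?_, ?_⟩
  · intro j hj
    rw [entryZ_joinRow, if_pos ⟨rfl, by omega⟩]
  · intro i j hki hij
    by_cases hik : i = k
    · subst hik
      have hjm : j < m := by omega
      have h1 : entryZ (joinRow n i μ B) (i+1) j = ν ⟨j, hjm⟩ := by
        rw [entryZ_joinRow, if_neg (by omega), hBval j hjm]
      have h2 : entryZ (joinRow n i μ B) i j = μ j := by
        rw [entryZ_joinRow, if_pos ⟨rfl, by omega⟩]
      have h3 : entryZ (joinRow n i μ B) i (j+1) = μ (j+1) := by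
        rw [entryZ_joinRow, if_pos ⟨rfl, by omega⟩]
      rw [h1, h2, h3]
      exact ⟨(hν ⟨j, hjm⟩).2, (hν ⟨j, hjm⟩).1⟩
    · have h1 : entryZ (joinRow n k μ B) (i+1) j = entryZ B (i+1) j := by
        rw [entryZ_joinRow, if_neg (by omega)]
      have h2 : entryZ (joinRow n k μ B) i j = entryZ B i j := by
        rw [entryZ_joinRow, if_neg (by rintro ⟨h,-⟩; exact hik h)]
      have h3 : entryZ (joinRow n k μ B) i (j+1) = entryZ B i (j+1) := by
        rw [entryZ_joinRow, if_neg (by rintro ⟨h,-⟩; exact hik h)]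
      rw [h1, h2, h3]
      exact hB.2.1 i j (by omega) hij
  · intro p hp
    unfold joinRow
    rcases hp with hp | hp
    · rw [if_neg (by rintro ⟨h,-⟩; omega)]
      exact hB.2.2 p (Or.inl (by omega))
    · rw [if_neg (by rintro ⟨-,h⟩; exact hp h)]
      exact hB.2.2 p (Or.inr hp)

lemma truncRow_mem (n k m : ℕ) (hk : k + (m+1) = n) (μ : ℕ → ℤ) (A : GTIdx n → ℤ)
    (hA : A ∈ PatSet n k μ) :
    truncRow n k A ∈ PatSet n (k+1) (extZ m (fun j : Fin m => entryZ A (k+1) (j:ℕ))) := by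
  refine ⟨?_, ?_, ?_⟩
  · intro j hj
    have hjm : j < m := by omega
    rw [entryZ_truncRow, if_neg (by omega), extZ, dif_pos hjm]
  · intro i j hki hij
    have h1 : entryZ (truncRow n k A) (i+1) j = entryZ A (i+1) j := by
      rw [entryZ_truncRow, if_neg (by omega)]
    have h2 : entryZ (truncRow n k A) i j = entryZ A i j := by
      rw [entryZ_truncRow, if_neg (by omega)]
    have h3 : entryZ (truncRow n k A) i (j+1) = entryZ A i (j+1) := by
      rw [entryZ_truncRow, if_neg (by omega)]
    rw [h1, h2, h3]
    exact hA.2.1 i j (by omega) hij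
  · intro p hp
    unfold truncRow
    by_cases hpk : (p.1 : ℕ) = k
    · rw [if_pos hpk]
    · rw [if_neg hpk]
      refine hA.2.2 p ?_
      rcases hp with hp | hp
      · left; omega
      · right; exact hp

lemma joinRow_truncRow (n k : ℕ) (μ : ℕ → ℤ) (A : GTIdx n → ℤ) (hA : A ∈ PatSet n k μ) :
    joinRow n k μ (truncRow n k A) = A := by
  funext p
  unfold joinRow truncRow
  by_cases hc : (p.1 : ℕ) = k ∧ GTValid n p
  · rw [if_pos hc]
    have := hA.1 (p.2 : ℕ) (by unfold GTValid at hc; omega)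
    rw [entryZ_eq n A k (p.2:ℕ) (by omega) p.2.isLt] at this
    rw [← this]
    congr 1
    · rw [Prod.ext_iff]
      constructor
      · exact Fin.val_injective (by simp [hc.1])
      · simp
  · rw [if_neg hc]
    by_cases hpk : (p.1 : ℕ) = k
    · rw [if_pos hpk]
      refine (hA.2.2 p ?_).symm
      right
      intro hv
      exact hc ⟨hpk, hv⟩
    · rw [if_neg hpk]

lemma truncRow_joinRow (n k k' : ℕ) (hkk : k < k') (μ ν' : ℕ → ℤ) (B : GTIdx n → ℤ)
    (hB : B ∈ PatSet n k' ν') : truncRow n k (joinRow n k μ B) = B := by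
  funext p
  show (if (p.1 : ℕ) = k then (0:ℤ) else joinRow n k μ B p) = B p
  by_cases hpk : (p.1 : ℕ) = k
  · rw [if_pos hpk]
    exact (hB.2.2 p (Or.inl (by omega))).symm
  · rw [if_neg hpk]
    show (if (p.1 : ℕ) = k ∧ GTValid n p then μ (p.2:ℕ) else B p) = B p
    rw [if_neg (by rintro ⟨h,-⟩; exact hpk h)]
end Dev6
section Dev7
open Finset

lemma sum_extZ (m : ℕ) (ν : Fin m → ℤ) :
    ∑ j ∈ Finset.range m, extZ m ν j = ∑ j : Fin m, ν j := by
  rw [← Fin.sum_univ_eq_sum_range (fun j => extZ m ν j) m]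
  exact Finset.sum_congr rfl (fun j _ => extZ_coe m ν j)

lemma rowZ_mem (n k' m' : ℕ) (hk : k' + m' = n) (ν' : ℕ → ℤ) (B : GTIdx n → ℤ)
    (hB : B ∈ PatSet n k' ν') : rowZ n B k' = ∑ j ∈ Finset.range m', ν' j := by
  unfold rowZ
  rw [← Finset.sum_subset (show Finset.range m' ⊆ Finset.range n by
      intro t ht; simp only [Finset.mem_range] at *; omega)
    (fun x _ hx => entryZ_zero_mem n k' ν' B hB k' x
      (by simp only [Finset.mem_range] at hx; omega))]
  refine Finset.sum_congr rfl (fun j hj => ?_)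
  exact hB.1 j (by simp only [Finset.mem_range] at hj; omega)

lemma fwt_join (n k m : ℕ) (hk : k + (m+1) = n) (μ : ℕ → ℤ) (ν : Fin m → ℤ)
    (B : GTIdx n → ℤ) (hB : B ∈ PatSet n (k+1) (extZ m ν))
    (hjoin : joinRow n k μ B ∈ PatSet n k μ) :
    fwt n k (joinRow n k μ B)
      = Xo n k ^ ((∑ j ∈ Finset.range (m+1), μ j) - ∑ j : Fin m, ν j) * fwt n (k+1) B := by
  unfold fwt
  rw [Finset.prod_eq_prod_Ico_succ_bot (show k < n by omega)]
  congr 1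
  · congr 1
    rw [rowZ_join_ne n k μ B (k+1) (by omega),
      rowZ_top n k m hk μ _ hjoin,
      rowZ_mem n (k+1) m (by omega) (extZ m ν) B hB, sum_extZ]
  · refine Finset.prod_congr rfl (fun i hi => ?_)
    have hi' : k + 1 ≤ i := by simp only [Finset.mem_Ico] at hi; omega
    rw [rowZ_join_ne n k μ B i (by omega), rowZ_join_ne n k μ B (i+1) (by omega)]

lemma pat_split_eq (n k m : ℕ) (hk : k + (m+1) = n) (μ : ℕ → ℤ) :
    PatSet n k μ = ⋃ ν ∈ (↑(Fintype.piFinset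
        (fun j : Fin m => Finset.Icc (μ ((j:ℕ)+1)) (μ (j:ℕ)))) : Set (Fin m → ℤ)),
      joinRow n k μ '' PatSet n (k+1) (extZ m ν) := by
  ext A
  simp only [Set.mem_iUnion, Set.mem_image, Finset.mem_coe, Fintype.mem_piFinset,
    Finset.mem_Icc, exists_prop]
  constructor
  · intro hA
    refine ⟨fun j : Fin m => entryZ A (k+1) (j:ℕ), ?_, truncRow n k A,
      truncRow_mem n k m hk μ A hA, joinRow_truncRow n k μ A hA⟩
    intro j
    have h1 := hA.2.1 k (j:ℕ) (le_refl k) (by omega)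
    have h2 := hA.1 (j:ℕ) (by omega)
    have h3 := hA.1 ((j:ℕ)+1) (by omega)
    exact ⟨by rw [← h3]; exact h1.2, by rw [← h2]; exact h1.1⟩
  · rintro ⟨ν, hν, B, hB, rfl⟩
    exact joinRow_mem n k m hk μ ν (fun j => hν j) B hB
end Dev7
section Dev8
open Finset

lemma main_ind (n : ℕ) : ∀ m k, k + m = n → ∀ μ : ℕ → ℤ,
    (∀ j : ℕ, j + 1 < m → μ (j+1) ≤ μ j) →
    (PatSet n k μ).Finite ∧ altN n k m 0 ≠ 0 ∧
    altN n k m μ = altN n k m 0 * ∑ᶠ A ∈ PatSet n k μ, fwt n k A := by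
  intro m
  induction m with
  | zero =>
    intro k hk μ _
    have hP : PatSet n k μ = {(0 : GTIdx n → ℤ)} := by
      ext A
      simp only [Set.mem_singleton_iff]
      constructor
      · intro hA; funext p; exact hA.2.2 p (Or.inl (by omega))
      · rintro rfl
        exact ⟨fun j hj => absurd hj (by omega),
          fun i j hki hij => absurd hij (by omega), fun p _ => rfl⟩
    have halt : ∀ ν : ℕ → ℤ, altN n k 0 ν = 1 := fun ν => Matrix.det_fin_zero
    refine ⟨hP ▸ Set.finite_singleton _, by rw [halt]; exact one_ne_zero, ?_⟩
    rw [halt, halt, hP, finsum_mem_singleton]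
    unfold fwt
    rw [show Finset.Ico k n = ∅ from Finset.Ico_eq_empty (by omega), Finset.prod_empty, mul_one]
  | succ m ih =>
    intro k hk μ hdec
    set P := Fintype.piFinset (fun j : Fin m => Finset.Icc (μ ((j:ℕ)+1)) (μ (j:ℕ))) with hPdef
    have hext_dec : ∀ ν ∈ P, ∀ j : ℕ, j + 1 < m → extZ m ν (j+1) ≤ extZ m ν j := by
      intro ν hν j hj
      rw [extZ, extZ]
      rw [dif_pos (by omega : j + 1 < m), dif_pos (by omega : j < m)]
      have h1 := Fintype.mem_piFinset.mp hν ⟨j+1, by omega⟩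
      have h2 := Fintype.mem_piFinset.mp hν ⟨j, by omega⟩
      simp only [Finset.mem_Icc] at h1 h2
      exact le_trans h1.2 h2.1
    have hifin : ∀ ν ∈ P, (PatSet n (k+1) (extZ m ν)).Finite :=
      fun ν hν => (ih (k+1) (by omega) (extZ m ν) (hext_dec ν hν)).1
    have hfin : (PatSet n k μ).Finite := by
      rw [pat_split_eq n k m hk μ]
      exact Set.Finite.biUnion (Finset.finite_toSet P)
        (fun ν hν => ((hifin ν (by exact hν)).image _))
    have hzero_terms : altN n k (m+1) (0 : ℕ → ℤ)
        = altN n (k+1) m (0 : ℕ → ℤ) * ∏ i ∈ Finset.range m, (Xo n k - Xo n (k+1+i)) := by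
      rw [branching n k m (0 : ℕ → ℤ) (fun j _ => le_refl _)]
      congr 1
      have hP0 : Fintype.piFinset (fun j : Fin m =>
          Finset.Icc ((0:ℕ→ℤ) ((j:ℕ)+1)) ((0:ℕ→ℤ) (j:ℕ))) = {(0 : Fin m → ℤ)} := by
        ext ν
        simp only [Fintype.mem_piFinset, Pi.zero_apply, Finset.mem_Icc, Finset.mem_singleton]
        constructor
        · intro h; funext j
          have := h j
          simp only [Pi.zero_apply] at this ⊢
          omega
        · rintro rfl j; simp
      rw [hP0, Finset.sum_singleton]
      have hext0 : extZ m (0 : Fin m → ℤ) = (0 : ℕ → ℤ) := by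
        funext j; unfold extZ; split <;> rfl
      rw [hext0]
      simp
    have hden_ne : altN n k (m+1) (0:ℕ→ℤ) ≠ 0 := by
      rw [hzero_terms]
      refine mul_ne_zero (ih (k+1) (by omega) 0 (fun j _ => le_refl _)).2.1 ?_
      rw [Finset.prod_ne_zero_iff]
      intro i hi
      simp only [Finset.mem_range] at hi
      exact sub_ne_zero_of_ne (Xo_ne n k (k+1+i) (by omega) (by omega) (by omega))
    refine ⟨hfin, hden_ne, ?_⟩
    have hdisj : (↑P : Set (Fin m → ℤ)).PairwiseDisjoint
        (fun ν => joinRow n k μ '' PatSet n (k+1) (extZ m ν)) := by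
      intro ν hν ν' hν' hne
      rw [Function.onFun, Set.disjoint_left]
      rintro A ⟨B, hB, rfl⟩ ⟨B', hB', hBB'⟩
      apply hne
      have hteq : B' = B := by
        have h1 := truncRow_joinRow n k (k+1) (by omega) μ (extZ m ν) B hB
        have h2 := truncRow_joinRow n k (k+1) (by omega) μ (extZ m ν') B' hB'
        rw [← h1, ← h2, hBB']
      funext j
      have e1 : entryZ B (k+1) (j:ℕ) = ν j := by rw [hB.1 (j:ℕ) (by omega), extZ_coe]
      have e2 : entryZ B' (k+1) (j:ℕ) = ν' j := by rw [hB'.1 (j:ℕ) (by omega), extZ_coe]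
      rw [← e1, ← e2, hteq]
    have hsplit_sum : ∑ᶠ A ∈ PatSet n k μ, fwt n k A
        = ∑ ν ∈ P, Xo n k ^ ((∑ j ∈ Finset.range (m+1), μ j) - ∑ j : Fin m, ν j)
            * ∑ᶠ B ∈ PatSet n (k+1) (extZ m ν), fwt n (k+1) B := by
      rw [pat_split_eq n k m hk μ]
      rw [finsum_mem_biUnion hdisj (Finset.finite_toSet P)
        (fun ν hν => (hifin ν hν).image _)]
      rw [finsum_mem_coe_finset]
      refine Finset.sum_congr rfl (fun ν hν => ?_)
      have hinjOn : Set.InjOn (joinRow n k μ) (PatSet n (k+1) (extZ m ν)) := by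
        intro B hB B' hB' h
        rw [← truncRow_joinRow n k (k+1) (by omega) μ (extZ m ν) B hB, h,
          truncRow_joinRow n k (k+1) (by omega) μ (extZ m ν) B' hB']
      rw [finsum_mem_image hinjOn]
      rw [finsum_mem_congr rfl (fun B hB => fwt_join n k m hk μ ν B hB
        (joinRow_mem n k m hk μ ν (fun j => by
          have := Fintype.mem_piFinset.mp hν j
          simpa [Finset.mem_Icc] using this) B hB))]
      rw [← Set.Finite.coe_toFinset (hifin ν hν), finsum_mem_coe_finset,
        finsum_mem_coe_finset, Finset.mul_sum]
    rw [branching n k m μ (fun j hj => hdec j (by omega)), hsplit_sum, hzero_terms]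
    rw [Finset.sum_congr rfl (fun ν hν =>
      by rw [(ih (k+1) (by omega) (extZ m ν) (hext_dec ν hν)).2.2] :
        ∀ ν ∈ P, Xo n k ^ ((∑ j ∈ Finset.range (m+1), μ j) - ∑ j : Fin m, ν j)
            * altN n (k+1) m (extZ m ν)
          = Xo n k ^ ((∑ j ∈ Finset.range (m+1), μ j) - ∑ j : Fin m, ν j)
            * (altN n (k+1) m 0 * ∑ᶠ B ∈ PatSet n (k+1) (extZ m ν), fwt n (k+1) B))]
    rw [Finset.sum_mul, Finset.mul_sum]
    exact Finset.sum_congr rfl (fun ν hν => by ring)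
end Dev8
section Dev9
open Finset

def lamE (n : ℕ) (lam : Fin n → ℤ) : ℕ → ℤ := fun j => if h : j < n then lam ⟨j, h⟩ else 0

lemma GTPat_eq_PatSet (n : ℕ) (lam : Fin n → ℤ) : GTPat n lam = PatSet n 0 (lamE n lam) := by
  ext A
  constructor
  · rintro ⟨h1, h2, h3⟩
    refine ⟨fun j hj => ?_, fun i j _ hij => h2 i j hij, fun p hp => h3 p ?_⟩
    · have hjn : j < n := by omega
      have := h1 ⟨j, hjn⟩
      unfold lamE
      rw [dif_pos hjn]
      exact this
    · rcases hp with hp | hp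
      · omega
      · exact hp
  · rintro ⟨h1, h2, h3⟩
    refine ⟨fun j => ?_, fun i j hij => h2 i j (by omega) hij, fun p hp => h3 p (Or.inr hp)⟩
    have := h1 (j:ℕ) (by omega)
    unfold lamE at this
    rw [dif_pos j.isLt] at this
    simpa using this

lemma emon_fwt (n : ℕ) (A : GTIdx n → ℤ) : emon (wtZ A) = fwt n 0 A := by
  unfold emon fwt wtZ rowZ
  rw [show Finset.Ico 0 n = Finset.range n from (Finset.range_eq_Ico n).symm]
  rw [← Fin.prod_univ_eq_prod_range (fun i => Xo n i ^
    ((∑ j ∈ Finset.range n, entryZ A i j) - ∑ j ∈ Finset.range n, entryZ A (i+1) j)) n]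
  refine Finset.prod_congr rfl (fun i _ => ?_)
  rw [show Xo n (i:ℕ) = xv n i from by unfold Xo; rw [dif_pos i.isLt, Fin.eta]]
  congr 1
  rw [← Fin.sum_univ_eq_sum_range (fun j => entryZ A (i:ℕ) j) n,
    ← Fin.sum_univ_eq_sum_range (fun j => entryZ A ((i:ℕ)+1) j) n]

lemma alt_eq (n : ℕ) (g : Fin n → ℤ) (g' : ℕ → ℤ) (hg : ∀ j : Fin n, g' (j:ℕ) = g j) :
    (∑ w : Equiv.Perm (Fin n), ((Equiv.Perm.sign w : ℤ) : Kx n)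
      * ∏ i, xv n i ^ (g (w⁻¹ i) + rhoW n (w⁻¹ i))) = altN n 0 n g' := by
  unfold altN
  rw [Matrix.det_apply']
  refine Finset.sum_congr rfl (fun σ _ => ?_)
  congr 1
  have key : ∀ i : Fin n, (Matrix.of fun i j : Fin n =>
      Xo n (0+(i:ℕ)) ^ (g' (j:ℕ) + ((n:ℤ) - 1 - (j:ℕ)))) (σ i) i
      = (fun i => xv n i ^ (g (σ⁻¹ i) + rhoW n (σ⁻¹ i))) (σ i) := by
    intro i
    simp only [Matrix.of_apply]
    unfold Xo
    rw [dif_pos (by omega : 0 + ((σ i):ℕ) < n)]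
    have h1 : (⟨0 + ((σ i):ℕ), by omega⟩ : Fin n) = σ i := by
      apply Fin.val_injective; simp
    rw [h1, (by exact σ.symm_apply_apply i : σ⁻¹ (σ i) = i), hg]
    unfold rhoW
    try push_cast
    try ring_nf
    try rfl
  calc ∏ i, xv n i ^ (g (σ⁻¹ i) + rhoW n (σ⁻¹ i))
      = ∏ i, (fun i => xv n i ^ (g (σ⁻¹ i) + rhoW n (σ⁻¹ i))) (σ i) :=
        (Equiv.prod_comp σ _).symm
    _ = ∏ i, (Matrix.of fun i j : Fin n =>
          Xo n (0+(i:ℕ)) ^ (g' (j:ℕ) + ((n:ℤ) - 1 - (j:ℕ)))) (σ i) i :=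
        Finset.prod_congr rfl (fun i _ => (key i).symm)
end Dev9

theorem statement0' (n : ℕ) (lam : Fin n → ℤ)
    (hlam : ∀ i j : Fin n, i ≤ j → lam j ≤ lam i) :
    schur n lam = ∑ᶠ A ∈ GTPat n lam, emon (wtZ A) := by
  classical
  have hdec : ∀ j : ℕ, j + 1 < n → lamE n lam (j+1) ≤ lamE n lam j := by
    intro j hj
    unfold lamE
    rw [dif_pos (by omega : j + 1 < n), dif_pos (by omega : j < n)]
    exact hlam ⟨j, by omega⟩ ⟨j+1, by omega⟩ (by simp [Fin.le_def])
  obtain ⟨hfin, hne, hid⟩ := main_ind n n 0 (by omega) (lamE n lam) hdec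
  have hnum := alt_eq n (fun i => lam i) (lamE n lam)
    (fun j => by unfold lamE; rw [dif_pos j.isLt])
  have hden := alt_eq n (fun _ => 0) (0 : ℕ → ℤ) (fun j => rfl)
  unfold schur
  simp only [zero_add] at hden
  rw [hnum, hden, hid, mul_div_cancel_left₀ _ hne, GTPat_eq_PatSet n lam]
  exact (finsum_mem_congr rfl (fun A _ => emon_fwt n A)).symm

/-- the Schur polynomial is the sum over Gelfand–Tsetlin patterns with top
row λ of the monomials x^{μ_A}. -/
theorem statement0 (n : ℕ) (lam : Fin n → ℤ)
    (hlam : ∀ i j : Fin n, i ≤ j → lam j ≤ lam i) :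
    schur n lam = ∑ᶠ A ∈ GTPat n lam, emon (wtZ A) := by
  exact statement0' n lam hlam
end

section
/- A point A of the Gelfand–Tsetlin polytope GT_λ is a vertex if and only if for every 1 ≤ i ≤ n−1 and 1 ≤ j ≤ n−i, the entry A_{i,j} equals at least one of its upper neighbors A_{i−1,j} or A_{i−1,j+1}. -/
open scoped BigOperators Classical

section St3Aux

lemma st3_entryR_eq {n : ℕ} (A : GTIdx n → ℝ) {i j : ℕ} (hi : i < n) (hj : j < n) :
    entryR A i j = A (⟨i, hi⟩, ⟨j, hj⟩) := dif_pos ⟨hi, hj⟩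

lemma st3_rowStep {n : ℕ} {lam : Fin n → ℝ} {A : GTIdx n → ℝ}
    (hA : A ∈ GTPoly n lam)
    (hmono : ∀ (j : ℕ) (h1 : j < n) (h2 : j + 1 < n), lam ⟨j+1, h2⟩ ≤ lam ⟨j, h1⟩) :
    ∀ i j : ℕ, i + (j + 1) < n → entryR A i (j + 1) ≤ entryR A i j := by
  intro i j h
  cases i with
  | zero =>
    have h1 : entryR A 0 j = lam ⟨j, by omega⟩ := hA.1 ⟨j, by omega⟩
    have h2 : entryR A 0 (j+1) = lam ⟨j+1, by omega⟩ := hA.1 ⟨j+1, by omega⟩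
    rw [h1, h2]
    exact hmono j (by omega) (by omega)
  | succ i' =>
    have h1 := (hA.2.1 i' (j+1) (by omega)).1
    have h2 := (hA.2.1 i' j (by omega)).2
    exact le_trans h1 h2

lemma st3_rowMonoAux {n : ℕ} {lam : Fin n → ℝ} {A : GTIdx n → ℝ}
    (hA : A ∈ GTPoly n lam)
    (hmono : ∀ (j : ℕ) (h1 : j < n) (h2 : j + 1 < n), lam ⟨j+1, h2⟩ ≤ lam ⟨j, h1⟩) :
    ∀ d i j : ℕ, i + (j + d) < n → entryR A i (j + d) ≤ entryR A i j := by
  intro d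
  induction d with
  | zero => intro i j h; simp
  | succ d ih =>
    intro i j h
    rw [show j + (d+1) = (j+1) + d by omega]
    exact le_trans (ih i (j+1) (by omega)) (st3_rowStep hA hmono i j (by omega))

lemma st3_rowMono {n : ℕ} {lam : Fin n → ℝ} {A : GTIdx n → ℝ}
    (hA : A ∈ GTPoly n lam)
    (hmono : ∀ (j : ℕ) (h1 : j < n) (h2 : j + 1 < n), lam ⟨j+1, h2⟩ ≤ lam ⟨j, h1⟩)
    (i j k : ℕ) (hjk : j ≤ k) (hk : i + k < n) : entryR A i k ≤ entryR A i j := by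
  obtain ⟨d, rfl⟩ := Nat.exists_eq_add_of_le hjk
  exact st3_rowMonoAux hA hmono d i j hk

lemma st3_avg_le {a b u w c : ℝ} (ha : 0 < a) (hb : 0 < b) (hab : a + b = 1)
    (hu : u ≤ c) (hw : w ≤ c) (h : a * u + b * w = c) : u = c ∧ w = c := by
  have h0 : a * (c - u) + b * (c - w) = 0 := by linear_combination c * hab - h
  have t1 : 0 ≤ a * (c - u) := mul_nonneg ha.le (by linarith)
  have t2 : 0 ≤ b * (c - w) := mul_nonneg hb.le (by linarith)
  have e1 : a * (c - u) = 0 := by linarith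
  have e2 : b * (c - w) = 0 := by linarith
  constructor
  · rcases mul_eq_zero.mp e1 with h' | h'
    · exact absurd h' (ne_of_gt ha)
    · linarith
  · rcases mul_eq_zero.mp e2 with h' | h'
    · exact absurd h' (ne_of_gt hb)
    · linarith

lemma st3_avg_ge {a b u w c : ℝ} (ha : 0 < a) (hb : 0 < b) (hab : a + b = 1)
    (hu : c ≤ u) (hw : c ≤ w) (h : a * u + b * w = c) : u = c ∧ w = c := by
  have := st3_avg_le (a := a) (b := b) (u := -u) (w := -w) (c := -c) ha hb hab
    (by linarith) (by linarith) (by linarith)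
  constructor <;> linarith [this.1, this.2]

end St3Aux

/-- for regular λ, a point A of GT_λ is a vertex (extreme point) iff every
entry A_{i,j} with i ≥ 1 equals one of its upper neighbours. -/
theorem statement3 (n : ℕ) (lam : Fin n → ℤ)
    (hreg : ∀ i j : Fin n, i < j → lam j < lam i)
    (A : GTIdx n → ℝ) (hA : A ∈ GTPoly n (fun i => (lam i : ℝ))) :
    A ∈ Set.extremePoints ℝ (GTPoly n (fun i => (lam i : ℝ))) ↔
      ∀ i j : ℕ, i + 1 + j < n →
        entryR A (i + 1) j = entryR A i j ∨ entryR A (i + 1) j = entryR A i (j + 1) := by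
  classical
  obtain ⟨htop, hint, hzero⟩ := hA
  have hA' : A ∈ GTPoly n (fun i => (lam i : ℝ)) := ⟨htop, hint, hzero⟩
  have hmono : ∀ (j : ℕ) (h1 : j < n) (h2 : j + 1 < n),
      (fun i => (lam i : ℝ)) ⟨j+1, h2⟩ ≤ (fun i => (lam i : ℝ)) ⟨j, h1⟩ := by
    intro j h1 h2
    have := hreg ⟨j, h1⟩ ⟨j+1, h2⟩ (by simp [Fin.lt_def])
    simp only []
    exact_mod_cast this.le
  constructor
  · -- extreme → equality condition
    intro hext
    rw [mem_extremePoints] at hext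
    obtain ⟨-, hext2⟩ := hext
    by_contra hcon
    push_neg at hcon
    obtain ⟨i, j, hij, h1ne, h2ne⟩ := hcon
    have hlt1 : entryR A (i+1) j < entryR A i j :=
      lt_of_le_of_ne (hint i j hij).1 h1ne
    have hlt2 : entryR A i (j+1) < entryR A (i+1) j :=
      lt_of_le_of_ne (hint i j hij).2 (Ne.symm h2ne)
    set v : ℝ := entryR A (i+1) j with hv
    set C : GTIdx n → Prop :=
      fun p => GTValid n p ∧ A p = v ∧ i + 1 ≤ (p.1 : ℕ) with hC
    -- the gap bound t
    obtain ⟨t, ht0, hgap⟩ : ∃ t : ℝ, 0 < t ∧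
        ∀ p q : GTIdx n, A p < A q → A p + t ≤ A q := by
      set G : Finset ℝ := insert 1
        (((Finset.univ ×ˢ Finset.univ : Finset (GTIdx n × GTIdx n)).filter
            (fun pq => A pq.1 ≠ A pq.2)).image fun pq => |A pq.1 - A pq.2|) with hG
      have hGne : G.Nonempty := ⟨1, Finset.mem_insert_self _ _⟩
      refine ⟨G.min' hGne, ?_, ?_⟩
      · have htG : G.min' hGne ∈ G := G.min'_mem hGne
        rcases Finset.mem_insert.mp htG with h | h
        · rw [h]; norm_num
        · obtain ⟨pq, hpq, hval⟩ := Finset.mem_image.mp h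
          rw [← hval]
          exact abs_pos.mpr (sub_ne_zero.mpr (Finset.mem_filter.mp hpq).2)
      · intro p q h
        have hmem : |A p - A q| ∈ G := by
          refine Finset.mem_insert_of_mem (Finset.mem_image.mpr ⟨(p, q), ?_, rfl⟩)
          exact Finset.mem_filter.mpr ⟨by simp, ne_of_lt h⟩
        have hmin := G.min'_le _ hmem
        have habs : |A p - A q| = A q - A p := by
          rw [abs_sub_comm]; exact abs_of_pos (sub_pos.mpr h)
        linarith [hmin, habs]
    -- uniqueness of the value v in row i+1
    have huniq : ∀ j' : ℕ, i + 1 + j' < n → entryR A (i+1) j' = v → j' = j := by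
      intro j' hj' hveq
      by_contra hne
      rcases Nat.lt_or_ge j' j with h | h
      · have hb : entryR A i (j'+1) ≤ entryR A (i+1) j' := (hint i j' hj').2
        have hc : entryR A i j ≤ entryR A i (j'+1) :=
          st3_rowMono hA' hmono i (j'+1) j (by omega) (by omega)
        linarith
      · have h' : j < j' := by omega
        have hb : entryR A (i+1) j' ≤ entryR A i j' := (hint i j' hj').1
        have hc : entryR A i j' ≤ entryR A i (j+1) :=
          st3_rowMono hA' hmono i (j+1) j' (by omega) (by omega)
        linarith
    -- the perturbed points
    set x₁ : GTIdx n → ℝ := fun p => if C p then A p + t else A p with hx1def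
    set x₂ : GTIdx n → ℝ := fun p => if C p then A p - t else A p with hx2def
    have pair1 : ∀ p q : GTIdx n, A p ≤ A q → (C p → ¬ C q → A p ≠ A q) →
        (C q → ¬ C p → A p ≠ A q) → (x₁ p ≤ x₁ q ∧ x₂ p ≤ x₂ q) := by
      intro p q hle hpc hqc
      by_cases hp : C p <;> by_cases hq : C q
      · simp only [hx1def, hx2def, if_pos hp, if_pos hq]
        constructor <;> linarith
      · have := hgap p q (lt_of_le_of_ne hle (hpc hp hq))
        simp only [hx1def, hx2def, if_pos hp, if_neg hq]
        constructor <;> linarith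
      · have := hgap p q (lt_of_le_of_ne hle (hqc hq hp))
        simp only [hx1def, hx2def, if_neg hp, if_pos hq]
        constructor <;> linarith
      · simp only [hx1def, hx2def, if_neg hp, if_neg hq]
        exact ⟨hle, hle⟩
    -- interlacing for the perturbed points
    have hinter : ∀ i' j' : ℕ, i' + 1 + j' < n →
        (entryR x₁ (i'+1) j' ≤ entryR x₁ i' j' ∧ entryR x₁ i' (j'+1) ≤ entryR x₁ (i'+1) j') ∧
        (entryR x₂ (i'+1) j' ≤ entryR x₂ i' j' ∧ entryR x₂ i' (j'+1) ≤ entryR x₂ (i'+1) j') := by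
      intro i' j' h
      have hP : i' + 1 < n := by omega
      have hQi : i' < n := by omega
      have hj' : j' < n := by omega
      have hj'1 : j' + 1 < n := by omega
      set P : GTIdx n := (⟨i'+1, hP⟩, ⟨j', hj'⟩) with hPdef
      set Q : GTIdx n := (⟨i', hQi⟩, ⟨j', hj'⟩) with hQdef
      set R : GTIdx n := (⟨i', hQi⟩, ⟨j'+1, hj'1⟩) with hRdef
      have eAP : A P = entryR A (i'+1) j' := (st3_entryR_eq A hP hj').symm
      have eAQ : A Q = entryR A i' j' := (st3_entryR_eq A hQi hj').symm
      have eAR : A R = entryR A i' (j'+1) := (st3_entryR_eq A hQi hj'1).symm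
      have hPQ : A P ≤ A Q := by rw [eAP, eAQ]; exact (hint i' j' h).1
      have hRP : A R ≤ A P := by rw [eAR, eAP]; exact (hint i' j' h).2
      have f1 : C P → ¬ C Q → A P ≠ A Q := by
        intro hCP hCQ heq
        obtain ⟨-, hval, hrow⟩ := hCP
        have hrow' : i + 1 ≤ i' + 1 := hrow
        rcases Nat.lt_or_ge i' (i+1) with hlt | hge
        · have hii : i' = i := by omega
          have h5 : entryR A (i+1) j' = v := by rw [← hii, ← eAP]; exact hval
          have hjj : j' = j := huniq j' (by omega) h5
          have h6 : entryR A i j = v := by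
            rw [← hii, ← hjj, ← eAQ, ← heq]; exact hval
          linarith
        · exact hCQ ⟨by show i' + j' < n; omega, by rw [← heq]; exact hval, hge⟩
      have f2 : C Q → ¬ C P → A P ≠ A Q := by
        intro hCQ hCP heq
        obtain ⟨-, hval, hrow⟩ := hCQ
        have hrow2 : i + 1 ≤ i' := hrow
        exact hCP ⟨by show i' + 1 + j' < n; omega, by rw [heq]; exact hval,
          by show i + 1 ≤ i' + 1; omega⟩
      have f3 : C R → ¬ C P → A R ≠ A P := by
        intro hCR hCP heq
        obtain ⟨-, hval, hrow⟩ := hCR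
        have hrow2 : i + 1 ≤ i' := hrow
        exact hCP ⟨by show i' + 1 + j' < n; omega, by rw [← heq]; exact hval,
          by show i + 1 ≤ i' + 1; omega⟩
      have f4 : C P → ¬ C R → A R ≠ A P := by
        intro hCP hCR heq
        obtain ⟨-, hval, hrow⟩ := hCP
        have hrow' : i + 1 ≤ i' + 1 := hrow
        rcases Nat.lt_or_ge i' (i+1) with hlt | hge
        · have hii : i' = i := by omega
          have h5 : entryR A (i+1) j' = v := by rw [← hii, ← eAP]; exact hval
          have hjj : j' = j := huniq j' (by omega) h5
          have h6 : entryR A i (j+1) = v := by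
            rw [← hii, ← hjj, ← eAR, heq]; exact hval
          linarith
        · exact hCR ⟨by show i' + (j'+1) < n; omega, by rw [heq]; exact hval, hge⟩
      have g1 := pair1 P Q hPQ f1 f2
      have g2 := pair1 R P hRP f3 f4
      rw [st3_entryR_eq x₁ hP hj', st3_entryR_eq x₁ hQi hj', st3_entryR_eq x₁ hQi hj'1,
        st3_entryR_eq x₂ hP hj', st3_entryR_eq x₂ hQi hj', st3_entryR_eq x₂ hQi hj'1]
      exact ⟨⟨g1.1, g2.1⟩, ⟨g1.2, g2.2⟩⟩
    have h0n : (0:ℕ) < n := by omega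
    have htopx : ∀ (x : GTIdx n → ℝ), (∀ p, ¬ C p → x p = A p) →
        ∀ jf : Fin n, entryR x 0 jf = (lam jf : ℝ) := by
      intro x hx jf
      rw [st3_entryR_eq x h0n jf.isLt]
      have hnc : ¬ C ((⟨0, h0n⟩ : Fin n), (⟨(jf:ℕ), jf.isLt⟩ : Fin n)) := by
        intro hc
        have := hc.2.2
        simp at this
      rw [hx _ hnc]
      have := htop jf
      rw [st3_entryR_eq A h0n jf.isLt] at this
      exact this
    have hx1eq : ∀ p, ¬ C p → x₁ p = A p := by
      intro p hp; simp only [hx1def]; rw [if_neg hp]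
    have hx2eq : ∀ p, ¬ C p → x₂ p = A p := by
      intro p hp; simp only [hx2def]; rw [if_neg hp]
    have hx1mem : x₁ ∈ GTPoly n (fun k => (lam k : ℝ)) := by
      refine ⟨htopx x₁ hx1eq, fun i' j' h => (hinter i' j' h).1, ?_⟩
      intro p hp
      rw [hx1eq p (fun hc => hp hc.1)]
      exact hzero p hp
    have hx2mem : x₂ ∈ GTPoly n (fun k => (lam k : ℝ)) := by
      refine ⟨htopx x₂ hx2eq, fun i' j' h => (hinter i' j' h).2, ?_⟩
      intro p hp
      rw [hx2eq p (fun hc => hp hc.1)]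
      exact hzero p hp
    have hseg : A ∈ openSegment ℝ x₁ x₂ := by
      refine ⟨1/2, 1/2, by norm_num, by norm_num, by norm_num, ?_⟩
      funext p
      simp only [Pi.add_apply, Pi.smul_apply, smul_eq_mul, hx1def, hx2def]
      by_cases hc : C p
      · rw [if_pos hc, if_pos hc]; ring
      · rw [if_neg hc, if_neg hc]; ring
    obtain ⟨h1A, h2A⟩ := hext2 x₁ hx1mem x₂ hx2mem hseg
    set p0 : GTIdx n := (⟨i+1, by omega⟩, ⟨j, by omega⟩) with hp0def
    have hCp0 : C p0 := by
      refine ⟨by show i + 1 + j < n; omega, ?_, by show i + 1 ≤ i + 1; omega⟩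
      rw [hv]
      exact (st3_entryR_eq A (by omega) (by omega)).symm
    have := congrFun h1A p0
    simp only [hx1def, if_pos hCp0] at this
    linarith
  · -- equality condition → extreme
    intro hcond
    rw [mem_extremePoints]
    refine ⟨hA', ?_⟩
    intro x₁ hx₁ x₂ hx₂ hseg
    obtain ⟨a, b, ha, hb, hab, hsum⟩ := hseg
    have hpt : ∀ (i j : ℕ) (hi : i < n) (hj : j < n),
        a * entryR x₁ i j + b * entryR x₂ i j = entryR A i j := by
      intro i j hi hj
      rw [st3_entryR_eq x₁ hi hj, st3_entryR_eq x₂ hi hj, st3_entryR_eq A hi hj]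
      have := congrFun hsum ((⟨i, hi⟩ : Fin n), (⟨j, hj⟩ : Fin n))
      simpa using this
    have key : ∀ i : ℕ, ∀ j : ℕ, i + j < n →
        entryR x₁ i j = entryR A i j ∧ entryR x₂ i j = entryR A i j := by
      intro i
      induction i with
      | zero =>
        intro j hj
        have e1 : entryR x₁ 0 j = (lam ⟨j, by omega⟩ : ℝ) := hx₁.1 ⟨j, by omega⟩
        have e2 : entryR x₂ 0 j = (lam ⟨j, by omega⟩ : ℝ) := hx₂.1 ⟨j, by omega⟩
        have e3 : entryR A 0 j = (lam ⟨j, by omega⟩ : ℝ) := htop ⟨j, by omega⟩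
        rw [e1, e2, e3]; exact ⟨rfl, rfl⟩
      | succ i ih =>
        intro j hj
        have hpt' := hpt (i+1) j (by omega) (by omega)
        rcases hcond i j hj with hcase | hcase
        · have h1 : entryR x₁ (i+1) j ≤ entryR x₁ i j := (hx₁.2.1 i j hj).1
          have h2 : entryR x₂ (i+1) j ≤ entryR x₂ i j := (hx₂.2.1 i j hj).1
          have e1 : entryR x₁ i j = entryR A i j := (ih j (by omega)).1
          have e2 : entryR x₂ i j = entryR A i j := (ih j (by omega)).2
          have := st3_avg_le (u := entryR x₁ (i+1) j) (w := entryR x₂ (i+1) j)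
            (c := entryR A i j) ha hb hab (by rw [← e1]; exact h1) (by rw [← e2]; exact h2)
            (by rw [hpt']; exact hcase)
          exact ⟨by rw [this.1]; exact hcase.symm, by rw [this.2]; exact hcase.symm⟩
        · have h1 : entryR x₁ i (j+1) ≤ entryR x₁ (i+1) j := (hx₁.2.1 i j hj).2
          have h2 : entryR x₂ i (j+1) ≤ entryR x₂ (i+1) j := (hx₂.2.1 i j hj).2
          have e1 : entryR x₁ i (j+1) = entryR A i (j+1) := (ih (j+1) (by omega)).1
          have e2 : entryR x₂ i (j+1) = entryR A i (j+1) := (ih (j+1) (by omega)).2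
          have := st3_avg_ge (u := entryR x₁ (i+1) j) (w := entryR x₂ (i+1) j)
            (c := entryR A i (j+1)) ha hb hab (by rw [← e1]; exact h1) (by rw [← e2]; exact h2)
            (by rw [hpt']; exact hcase)
          exact ⟨by rw [this.1]; exact hcase.symm, by rw [this.2]; exact hcase.symm⟩
    have hxA : ∀ (x : GTIdx n → ℝ), x ∈ GTPoly n (fun k => (lam k : ℝ)) →
        (∀ i j : ℕ, i + j < n → entryR x i j = entryR A i j) → x = A := by
      intro x hx hkey
      funext p
      by_cases hp : GTValid n p
      · have hk := hkey p.1 p.2 hp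
        rw [st3_entryR_eq x p.1.isLt p.2.isLt, st3_entryR_eq A p.1.isLt p.2.isLt] at hk
        simpa using hk
      · rw [hx.2.2 p hp, hzero p hp]
    exact ⟨hxA x₁ hx₁ (fun i j h => (key i j h).1), hxA x₂ hx₂ (fun i j h => (key i j h).2)⟩
end

section
/- For a regular dominant weight λ (λ_1 > … > λ_n), each defining inequality A_{i,j} ≥ A_{i+1,j} and A_{i+1,j} ≥ A_{i,j+1} of the Gelfand–Tsetlin polytope GT_λ defines a facet, i.e., no such inequality is implied by the others together with the equations A_{0,j} = λ_j. -/
open scoped BigOperators Classical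

/-- for regular λ, no defining inequality of GT_λ is implied by the others
together with the equations fixing the top row (each inequality defines a facet).
The Boolean s selects the inequality A_{i,j} ≥ A_{i+1,j} (s = true) or
A_{i+1,j} ≥ A_{i,j+1} (s = false). -/
theorem statement4 (n : ℕ) (lam : Fin n → ℤ)
    (hreg : ∀ i j : Fin n, i < j → lam j < lam i)
    (i j : ℕ) (hij : i + 1 + j < n) (s : Bool) :
    ∃ A : GTIdx n → ℝ,
      (∀ j' : Fin n, entryR A 0 j' = (lam j' : ℝ)) ∧
      (∀ p : GTIdx n, ¬ GTValid n p → A p = 0) ∧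
      (∀ i' j' : ℕ, i' + 1 + j' < n → ∀ s' : Bool, (i', j', s') ≠ (i, j, s) →
        if s' then entryR A (i' + 1) j' ≤ entryR A i' j'
        else entryR A i' (j' + 1) ≤ entryR A (i' + 1) j') ∧
      (if s then ¬ (entryR A (i + 1) j ≤ entryR A i j)
       else ¬ (entryR A i (j + 1) ≤ entryR A (i + 1) j)) := by
    classical
  set g : ℕ → ℕ → ℝ := fun r c => if r = i + 1 ∧ c = j then (r : ℝ) - 3/2 else (r : ℝ)
    with hgdef
  have hg1 : ∀ r c : ℕ, g r c ≤ (r : ℝ) := by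
    intro r c
    simp only [hgdef]
    split <;> linarith
  have hg2 : ∀ r c : ℕ, (r : ℝ) - 3/2 ≤ g r c := by
    intro r c
    simp only [hgdef]
    split <;> linarith
  have hg3 : ∀ r c : ℕ, ¬ (r = i + 1 ∧ c = j) → g r c = (r : ℝ) := by
    intro r c h
    simp only [hgdef, if_neg h]
  have hg4 : g (i+1) j = (i : ℝ) + 1 - 3/2 := by
    simp only [hgdef]
    rw [if_pos ⟨trivial, trivial⟩]
    push_cast; ring
  set lam' : ℕ → ℝ := fun k => if h : k < n then (lam ⟨k, h⟩ : ℝ) else 0 with hlamdef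
  have hlam : ∀ a b : ℕ, a < b → b < n → lam' b + 1 ≤ lam' a := by
    intro a b hab hbn
    have han : a < n := lt_trans hab hbn
    have h1 : lam ⟨b, hbn⟩ < lam ⟨a, han⟩ := hreg _ _ (Fin.mk_lt_mk.mpr hab)
    have h2 : (lam ⟨b, hbn⟩ : ℤ) + 1 ≤ lam ⟨a, han⟩ := h1
    simp only [hlamdef, dif_pos han, dif_pos hbn]
    exact_mod_cast h2
  set A : GTIdx n → ℝ := fun p =>
    if GTValid n p then
      (if s then lam' (p.2 : ℕ) - 4⁻¹ * g (p.1 : ℕ) (p.2 : ℕ)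
       else lam' ((p.1 : ℕ) + (p.2 : ℕ)) + 4⁻¹ * g (p.1 : ℕ) (p.2 : ℕ))
    else 0 with hAdef
  have hE : ∀ r c : ℕ, r + c < n →
      entryR A r c = if s then lam' c - 4⁻¹ * g r c else lam' (r + c) + 4⁻¹ * g r c := by
    intro r c h
    have hr : r < n := by omega
    have hc : c < n := by omega
    rw [entryR, dif_pos ⟨hr, hc⟩]
    show (if GTValid n ((⟨r, hr⟩ : Fin n), (⟨c, hc⟩ : Fin n)) then _ else 0) = _
    rw [if_pos (show GTValid n ((⟨r, hr⟩ : Fin n), (⟨c, hc⟩ : Fin n)) from h)]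
  refine ⟨A, ?_, ?_, ?_, ?_⟩
  · intro j'
    have hj : (0 : ℕ) + (j' : ℕ) < n := by simpa using j'.isLt
    have hlj : lam' (j' : ℕ) = (lam j' : ℝ) := by
      simp only [hlamdef, dif_pos j'.isLt, Fin.eta]
    have h0 : g 0 (j' : ℕ) = 0 := by
      rw [hg3 0 _ (by omega)]; simp
    rw [hE 0 (j' : ℕ) hj]
    cases s <;> simp [h0, hlj]
  · intro p hp
    simp only [hAdef, if_neg hp]
  · intro i' j' h3 s' hne
    have hv1 : (i' + 1) + j' < n := h3
    have hv2 : i' + j' < n := by omega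
    have hv3 : i' + (j' + 1) < n := by omega
    cases s' with
    | true =>
      simp only [if_true]
      rw [hE _ _ hv1, hE _ _ hv2]
      cases s with
      | true =>
        have hne' : ¬ (i' = i ∧ j' = j) := by
          rintro ⟨rfl, rfl⟩; exact hne rfl
        have h4 : g (i' + 1) j' = (i' : ℝ) + 1 := by
          rw [hg3 _ _ (by omega)]; push_cast; ring
        have h5 := hg1 i' j'
        simp only [if_true]
        have : (i' : ℝ) ≤ (i' : ℝ) + 1 := by linarith
        linarith [h5, h4.ge, h4.le]
      | false =>
        simp only [Bool.false_eq_true, if_false]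
        have hl := hlam (i' + j') (i' + 1 + j') (by omega) hv1
        have h4 := hg1 (i' + 1) j'
        have h5 := hg2 i' j'
        push_cast at h4 h5 ⊢
        linarith
    | false =>
      simp only [Bool.false_eq_true, if_false]
      rw [hE _ _ hv3, hE _ _ hv1]
      cases s with
      | true =>
        simp only [if_true]
        have hl := hlam j' (j' + 1) (by omega) (by omega)
        have h4 := hg2 i' (j' + 1)
        have h5 := hg1 (i' + 1) j'
        push_cast at h4 h5 ⊢
        linarith
      | false =>
        have hne' : ¬ (i' = i ∧ j' = j) := by
          rintro ⟨rfl, rfl⟩; exact hne rfl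
        simp only [Bool.false_eq_true, if_false]
        have harg : i' + (j' + 1) = (i' + 1) + j' := by omega
        rw [harg]
        have h4 : g (i' + 1) j' = (i' : ℝ) + 1 := by
          rw [hg3 _ _ (by omega)]; push_cast; ring
        have h5 := hg1 i' (j' + 1)
        linarith
  · have hv1 : (i + 1) + j < n := hij
    have hv2 : i + j < n := by omega
    have hv3 : i + (j + 1) < n := by omega
    cases s with
    | true =>
      simp only [if_true]
      rw [hE _ _ hv1, hE _ _ hv2]
      simp only [if_true, not_le]
      have h4 : g i j = (i : ℝ) := hg3 _ _ (by omega)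
      push_cast [hg4, h4]
      linarith
    | false =>
      simp only [Bool.false_eq_true, if_false]
      rw [hE _ _ hv3, hE _ _ hv1]
      simp only [Bool.false_eq_true, if_false, not_le]
      have harg : i + (j + 1) = (i + 1) + j := by omega
      rw [harg]
      have h4 : g i (j + 1) = (i : ℝ) := hg3 _ _ (by omega)
      push_cast [hg4, h4]
      linarith
end

section
/- Let v be a vertex of GT_λ for a regular weight λ, and let Γ_v be the graph on the pattern positions (i,j) whose edges join (i,j) to an upper neighbor (i−1,j) or (i−1,j+1) whenever the corresponding entries of v are equal. Then Γ_v has exactly n connected components, and each connected component contains exactly one node of row 0. -/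
open scoped BigOperators Classical

section AuxStatement5

variable {n : ℕ} {l : Fin n → ℝ} {A : GTIdx n → ℝ}

lemma entryR_of_lt (A : GTIdx n → ℝ) {i j : ℕ} (hi : i < n) (hj : j < n) :
    entryR A i j = A (⟨i, hi⟩, ⟨j, hj⟩) := dif_pos ⟨hi, hj⟩

lemma entryR_node (A : GTIdx n → ℝ) (p : GTIdx n) :
    entryR A (p.1 : ℕ) (p.2 : ℕ) = A p := by
  rw [entryR_of_lt A p.1.isLt p.2.isLt]

lemma row_step (hA : A ∈ GTPoly n l) (hl : ∀ i j : Fin n, i < j → l j < l i)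
    {r t : ℕ} (h : r + (t + 1) < n) :
    entryR A r (t + 1) ≤ entryR A r t := by
  cases r with
  | zero =>
    have ht : t < n := by omega
    have ht1 : t + 1 < n := by omega
    have h1 : entryR A 0 t = l ⟨t, ht⟩ := hA.1 ⟨t, ht⟩
    have h2 : entryR A 0 (t + 1) = l ⟨t + 1, ht1⟩ := hA.1 ⟨t + 1, ht1⟩
    rw [h1, h2]
    exact (hl ⟨t, ht⟩ ⟨t + 1, ht1⟩ (by simp [Fin.lt_def])).le
  | succ r' =>
    have h1 := (hA.2.1 r' (t + 1) (by omega)).1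
    have h2 := (hA.2.1 r' t (by omega)).2
    exact h1.trans h2

lemma row_mono (hA : A ∈ GTPoly n l) (hl : ∀ i j : Fin n, i < j → l j < l i)
    {r s t : ℕ} (hst : s ≤ t) (h : r + t < n) :
    entryR A r t ≤ entryR A r s := by
  induction t with
  | zero =>
    have : s = 0 := Nat.le_zero.mp hst
    simp [this]
  | succ t ih =>
    rcases Nat.eq_or_lt_of_le hst with rfl | hlt
    · exact le_refl _
    · exact (row_step hA hl h).trans (ih (Nat.lt_succ_iff.mp hlt) (by omega))

lemma reach_val {p q : GTNode n} (h : (Gamma n A).Reachable p q) : A p.1 = A q.1 := by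
  obtain ⟨w⟩ := h
  induction w with
  | nil => rfl
  | cons h _ ih => exact h.2.trans ih

lemma exists_up (hl : ∀ i j : Fin n, i < j → l j < l i)
    (hA : A ∈ Set.extremePoints ℝ (GTPoly n l)) (p : GTNode n) (hp : 1 ≤ (p.1.1 : ℕ)) :
    ∃ q : GTNode n, upEdge n p.1 q.1 ∧ A p.1 = A q.1 := by
  classical
  have hmem : A ∈ GTPoly n l := hA.1
  obtain ⟨⟨⟨i, hi⟩, ⟨j, hj⟩⟩, hvalid⟩ := p
  have hp' : 1 ≤ i := hp
  have hval' : i + j < n := hvalid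
  by_contra hcon
  push_neg at hcon
  have hi1 : i - 1 < n := by omega
  have hj2 : j + 1 < n := by omega
  have hq1v : GTValid n ((⟨i - 1, hi1⟩ : Fin n), (⟨j, hj⟩ : Fin n)) :=
    show i - 1 + j < n by omega
  have hq2v : GTValid n ((⟨i - 1, hi1⟩ : Fin n), (⟨j + 1, hj2⟩ : Fin n)) :=
    show i - 1 + (j + 1) < n by omega
  have hup1 : upEdge n ((⟨i, hi⟩ : Fin n), (⟨j, hj⟩ : Fin n))
      ((⟨i - 1, hi1⟩ : Fin n), (⟨j, hj⟩ : Fin n)) :=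
    ⟨hvalid, hq1v, show i - 1 + 1 = i by omega, Or.inl rfl⟩
  have hup2 : upEdge n ((⟨i, hi⟩ : Fin n), (⟨j, hj⟩ : Fin n))
      ((⟨i - 1, hi1⟩ : Fin n), (⟨j + 1, hj2⟩ : Fin n)) :=
    ⟨hvalid, hq2v, show i - 1 + 1 = i by omega, Or.inr rfl⟩
  have hin := hmem.2.1 (i - 1) j (by omega)
  have hii : i - 1 + 1 = i := by omega
  rw [hii] at hin
  rw [entryR_of_lt A hi hj, entryR_of_lt A hi1 hj, entryR_of_lt A hi1 hj2] at hin
  have hlt1 : A ((⟨i, hi⟩ : Fin n), (⟨j, hj⟩ : Fin n))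
      < A ((⟨i - 1, hi1⟩ : Fin n), (⟨j, hj⟩ : Fin n)) :=
    lt_of_le_of_ne hin.1 (hcon ⟨_, hq1v⟩ hup1)
  have hlt2 : A ((⟨i - 1, hi1⟩ : Fin n), (⟨j + 1, hj2⟩ : Fin n))
      < A ((⟨i, hi⟩ : Fin n), (⟨j, hj⟩ : Fin n)) :=
    lt_of_le_of_ne hin.2 (fun hEq => hcon ⟨_, hq2v⟩ hup2 hEq.symm)
  -- row i-1 contains no entry equal to the value at (i,j)
  have noA : ∀ s : ℕ, i - 1 + s < n →
      entryR A (i - 1) s ≠ A ((⟨i, hi⟩ : Fin n), (⟨j, hj⟩ : Fin n)) := by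
    intro s hs hEq
    rcases le_or_gt s j with h | h
    · have hmono := row_mono hmem hl h (show i - 1 + j < n by omega)
      rw [entryR_of_lt A hi1 hj, hEq] at hmono
      exact absurd hmono (not_le.mpr hlt1)
    · have hmono := row_mono hmem hl (show j + 1 ≤ s from h) hs
      rw [entryR_of_lt A hi1 hj2, hEq] at hmono
      exact absurd hmono (not_le.mpr hlt2)
  -- walk invariant: the component of (i,j) stays in rows ≥ i with constant value
  have inv : ∀ (u v : GTNode n) (w : (Gamma n A).Walk u v),
      A u.1 = A ((⟨i, hi⟩ : Fin n), (⟨j, hj⟩ : Fin n)) → i ≤ (u.1.1 : ℕ) →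
      A v.1 = A ((⟨i, hi⟩ : Fin n), (⟨j, hj⟩ : Fin n)) ∧ i ≤ (v.1.1 : ℕ) := by
    intro u v w
    induction w with
    | nil => exact fun h1 h2 => ⟨h1, h2⟩
    | @cons x y z hadj w' ih =>
      intro h1 h2
      have hmval : A y.1 = A ((⟨i, hi⟩ : Fin n), (⟨j, hj⟩ : Fin n)) :=
        hadj.2.symm.trans h1
      have hrow : i ≤ (y.1.1 : ℕ) := by
        have hd : (y.1.1 : ℕ) + 1 = (x.1.1 : ℕ) ∨ (x.1.1 : ℕ) + 1 = (y.1.1 : ℕ) := by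
          rcases hadj.1 with h | h
          · exact Or.inl h.2.2.1
          · exact Or.inr h.2.2.1
        by_contra hc
        have hvy : (y.1.1 : ℕ) + (y.1.2 : ℕ) < n := y.2
        have hy : i - 1 = (y.1.1 : ℕ) := by omega
        exact noA (y.1.2 : ℕ) (by omega) (by rw [hy, entryR_node]; exact hmval)
      exact ih hmval hrow
  set S : Set (GTIdx n) := {q | ∃ hq : GTValid n q,
      (Gamma n A).Reachable ⟨((⟨i, hi⟩ : Fin n), (⟨j, hj⟩ : Fin n)), hvalid⟩ ⟨q, hq⟩}
    with hSdef
  have hpS : (((⟨i, hi⟩ : Fin n), (⟨j, hj⟩ : Fin n)) : GTIdx n) ∈ S :=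
    ⟨hvalid, SimpleGraph.Reachable.refl _⟩
  have hSprop : ∀ q ∈ S, A q = A ((⟨i, hi⟩ : Fin n), (⟨j, hj⟩ : Fin n)) ∧ i ≤ (q.1 : ℕ) := by
    rintro q ⟨hq, hreach⟩
    obtain ⟨w⟩ := hreach
    have := inv _ _ w rfl (le_refl i)
    exact ⟨this.1, this.2⟩
  have hSvalid : ∀ q ∈ S, GTValid n q := by rintro q ⟨hq, -⟩; exact hq
  -- a positive gap below all distinct-value gaps
  obtain ⟨δ, hδ0, hδgap⟩ : ∃ δ : ℝ, 0 < δ ∧ ∀ u v : GTIdx n, A u ≠ A v → δ < |A u - A v| := by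
    set F : Finset ℝ :=
      insert 1 ((Finset.univ.image fun z : GTIdx n × GTIdx n => |A z.1 - A z.2|).filter
        fun x => 0 < x) with hF
    have hne : F.Nonempty := ⟨1, Finset.mem_insert_self _ _⟩
    have h0 : 0 < F.min' hne := by
      rcases Finset.mem_insert.mp (F.min'_mem hne) with h | h
      · rw [h]; norm_num
      · exact (Finset.mem_filter.mp h).2
    refine ⟨F.min' hne / 2, by linarith, fun u v huv => ?_⟩
    have habs : |A u - A v| ∈ F :=
      Finset.mem_insert_of_mem (Finset.mem_filter.mpr
        ⟨Finset.mem_image.mpr ⟨(u, v), Finset.mem_univ _, rfl⟩,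
         abs_pos.mpr (sub_ne_zero.mpr huv)⟩)
    have := F.min'_le _ habs
    linarith
  -- perturbed points
  have hBmem : ∀ d : ℝ, (∀ u v : GTIdx n, A u ≠ A v → |d| < |A u - A v|) →
      (fun q => if q ∈ S then A q + d else A q) ∈ GTPoly n l := by
    intro d hd
    have hpres : ∀ u v : GTIdx n, GTValid n u → GTValid n v →
        (upEdge n u v ∨ upEdge n v u) → A u ≤ A v →
        (if u ∈ S then A u + d else A u) ≤ (if v ∈ S then A v + d else A v) := by
      intro u v hu hv hupv hle
      by_cases h1 : u ∈ S <;> by_cases h2 : v ∈ S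
      · rw [if_pos h1, if_pos h2]; linarith
      · rw [if_pos h1, if_neg h2]
        have hne : A u ≠ A v := by
          intro hEq
          obtain ⟨hu', hr⟩ := h1
          exact h2 ⟨hv, hr.trans (SimpleGraph.Adj.reachable
            (show (Gamma n A).Adj ⟨u, hu'⟩ ⟨v, hv⟩ from ⟨hupv, hEq⟩))⟩
        have hgap := hd u v hne
        have hlt := lt_of_le_of_ne hle hne
        have h3 : |A u - A v| = A v - A u := by
          rw [abs_sub_comm]; exact abs_of_pos (by linarith)
        have h4 := le_abs_self d
        linarith
      · rw [if_neg h1, if_pos h2]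
        have hne : A u ≠ A v := by
          intro hEq
          obtain ⟨hv', hr⟩ := h2
          exact h1 ⟨hu, hr.trans (SimpleGraph.Adj.reachable
            (show (Gamma n A).Adj ⟨v, hv'⟩ ⟨u, hu⟩ from ⟨Or.symm hupv, hEq.symm⟩))⟩
        have hgap := hd u v hne
        have hlt := lt_of_le_of_ne hle hne
        have h3 : |A u - A v| = A v - A u := by
          rw [abs_sub_comm]; exact abs_of_pos (by linarith)
        have h4 := neg_abs_le d
        linarith
      · rw [if_neg h1, if_neg h2]; exact hle
    refine ⟨?_, ?_, ?_⟩
    · intro jf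
      have h0n : 0 < n := by omega
      rw [entryR_of_lt _ h0n jf.isLt]
      have hnotS : (((⟨0, h0n⟩ : Fin n), (⟨(jf : ℕ), jf.isLt⟩ : Fin n)) : GTIdx n) ∉ S := by
        intro hmemS
        have h5 : i ≤ 0 := (hSprop _ hmemS).2
        omega
      rw [if_neg hnotS]
      have h6 := hmem.1 jf
      rw [entryR_of_lt A h0n jf.isLt] at h6
      exact h6
    · intro i' j' h'
      have b1 : i' + 1 < n := by omega
      have b2 : i' < n := by omega
      have b3 : j' < n := by omega
      have b4 : j' + 1 < n := by omega
      constructor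
      · rw [entryR_of_lt _ b1 b3, entryR_of_lt _ b2 b3]
        refine hpres _ _ (show i' + 1 + j' < n by omega) (show i' + j' < n by omega)
          (Or.inl ⟨show i' + 1 + j' < n by omega, show i' + j' < n by omega, rfl,
            Or.inl rfl⟩) ?_
        have h6 := (hmem.2.1 i' j' h').1
        rw [entryR_of_lt A b1 b3, entryR_of_lt A b2 b3] at h6
        exact h6
      · rw [entryR_of_lt _ b2 b4, entryR_of_lt _ b1 b3]
        refine hpres ((⟨i', b2⟩ : Fin n), (⟨j' + 1, b4⟩ : Fin n))
          ((⟨i' + 1, b1⟩ : Fin n), (⟨j', b3⟩ : Fin n))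
          (show i' + (j' + 1) < n by omega) (show i' + 1 + j' < n by omega)
          (Or.inr ⟨show i' + 1 + j' < n by omega, show i' + (j' + 1) < n by omega, rfl,
            Or.inr rfl⟩) ?_
        have h6 := (hmem.2.1 i' j' h').2
        rw [entryR_of_lt A b2 b4, entryR_of_lt A b1 b3] at h6
        exact h6
    · intro q hq
      dsimp only
      rw [if_neg (fun hmemS => hq (hSvalid q hmemS))]
      exact hmem.2.2 q hq
  have hB1 := hBmem δ (by intro u v h; rw [abs_of_pos hδ0]; exact hδgap u v h)
  have hB2 := hBmem (-δ) (by intro u v h; rw [abs_neg, abs_of_pos hδ0]; exact hδgap u v h)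
  have hseg : A ∈ openSegment ℝ (fun q => if q ∈ S then A q + δ else A q)
      (fun q => if q ∈ S then A q + (-δ) else A q) := by
    refine ⟨1/2, 1/2, by norm_num, by norm_num, by norm_num, ?_⟩
    funext q
    simp only [Pi.add_apply, Pi.smul_apply, smul_eq_mul]
    by_cases h : q ∈ S
    · simp only [if_pos h]; ring
    · simp only [if_neg h]; ring
  have hfinal := hA.2 hB1 hB2 hseg
  have hev := congrFun hfinal (((⟨i, hi⟩ : Fin n), (⟨j, hj⟩ : Fin n)) : GTIdx n)
  simp only [if_pos hpS] at hev
  linarith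

end AuxStatement5

/-- for a vertex v of GT_λ (λ regular) the equality graph Γ_v has exactly n
connected components, and each component contains exactly one node of row 0. -/
theorem statement5 (n : ℕ) (lam : Fin n → ℤ)
    (hreg : ∀ i j : Fin n, i < j → lam j < lam i)
    (A : GTIdx n → ℝ)
    (hA : A ∈ Set.extremePoints ℝ (GTPoly n (fun i => (lam i : ℝ)))) :
    Nat.card (Gamma n A).ConnectedComponent = n ∧
    ∀ c : (Gamma n A).ConnectedComponent,
      ∃! p : GTNode n, ((p.1.1 : ℕ) = 0 ∧ (Gamma n A).connectedComponentMk p = c) := by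
  classical
  have hl : ∀ i j : Fin n, i < j →
      (fun i => (lam i : ℝ)) j < (fun i => (lam i : ℝ)) i := by
    intro i j h
    show (lam j : ℝ) < (lam i : ℝ)
    exact_mod_cast hreg i j h
  have hmem := hA.1
  rcases Nat.eq_zero_or_pos n with rfl | hn
  · have hE : IsEmpty (GTNode 0) := ⟨fun x => Fin.elim0 x.1.1⟩
    have hE2 : IsEmpty ((Gamma 0 A).ConnectedComponent) :=
      ⟨fun c => SimpleGraph.ConnectedComponent.ind (fun v => hE.elim v) c⟩
    exact ⟨Nat.card_of_isEmpty, fun c => (hE2.false c).elim⟩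
  · have hvalid0 : ∀ jf : Fin n, GTValid n ((⟨0, hn⟩ : Fin n), jf) := fun jf =>
      show 0 + (jf : ℕ) < n by simp
    set node0 : Fin n → GTNode n := fun jf => ⟨((⟨0, hn⟩ : Fin n), jf), hvalid0 jf⟩
      with hnode0
    have htopval : ∀ jf : Fin n, A (node0 jf).1 = (lam jf : ℝ) := by
      intro jf
      have h6 := hmem.1 jf
      rw [entryR_of_lt A hn jf.isLt] at h6
      exact h6
    have hinj : Function.Injective
        (fun jf => (Gamma n A).connectedComponentMk (node0 jf)) := by
      intro j1 j2 hEq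
      have hre := SimpleGraph.ConnectedComponent.exact hEq
      have hv := reach_val hre
      rw [htopval j1, htopval j2] at hv
      by_contra hne
      rcases Ne.lt_or_gt hne with h | h
      · exact (hl j1 j2 h).ne hv.symm
      · exact (hl j2 j1 h).ne hv
    have hsurj : Function.Surjective
        (fun jf => (Gamma n A).connectedComponentMk (node0 jf)) := by
      intro c
      obtain ⟨q, hq⟩ := c.exists_rep
      have hreach : ∀ k : ℕ, ∀ u : GTNode n, (u.1.1 : ℕ) = k →
          ∃ jf : Fin n, (Gamma n A).Reachable u (node0 jf) := by
        intro k
        induction k with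
        | zero =>
          intro u hu
          refine ⟨u.1.2, ?_⟩
          have h1 : u.1.1 = (⟨0, hn⟩ : Fin n) := Fin.ext hu
          have h2 : u = node0 u.1.2 := Subtype.ext (Prod.ext_iff.mpr ⟨h1, rfl⟩)
          rw [← h2]
        | succ k ih =>
          intro u hu
          obtain ⟨r, hupE, hAeq⟩ := exists_up hl hA u (by omega)
          have hadj : (Gamma n A).Adj u r := ⟨Or.inl hupE, hAeq⟩
          obtain ⟨jf, hjf⟩ := ih r (by have := hupE.2.2.1; omega)
          exact ⟨jf, hadj.reachable.trans hjf⟩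
      obtain ⟨jf, hjf⟩ := hreach _ q rfl
      exact ⟨jf, (SimpleGraph.ConnectedComponent.sound hjf).symm.trans hq⟩
    constructor
    · have hcard := Nat.card_eq_of_bijective _ ⟨hinj, hsurj⟩
      rw [← hcard, Nat.card_eq_fintype_card, Fintype.card_fin]
    · intro c
      obtain ⟨jf, hjf⟩ := hsurj c
      refine ⟨node0 jf, ⟨rfl, hjf⟩, ?_⟩
      rintro ⟨⟨fi, fjj⟩, hv⟩ ⟨h0, hc⟩
      have hfi : fi = (⟨0, hn⟩ : Fin n) := Fin.ext h0
      subst hfi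
      have hnodeEq : (⟨((⟨0, hn⟩ : Fin n), fjj), hv⟩ : GTNode n) = node0 fjj :=
        Subtype.ext rfl
      rw [hnodeEq] at hc ⊢
      have hjj : fjj = jf := hinj (hc.trans hjf.symm)
      rw [hjj]
end

section
/- Each connected component Δ of the graph Γ_v associated to a vertex v of GT_λ satisfies property A: if Δ contains both nodes (i,j) and (i,j+1), then Δ also contains their common neighbors (i−1,j+1) and (i+1,j). -/
open scoped BigOperators Classical

lemma gamma_eq_of_reachable {n : ℕ} {A : GTIdx n → ℝ} {p q : GTNode n}
    (h : (Gamma n A).Reachable p q) : A p.1 = A q.1 := by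
  obtain ⟨w⟩ := h
  induction w with
  | nil => rfl
  | cons h w ih => exact h.2.trans ih

lemma entry_node {n : ℕ} (A : GTIdx n → ℝ) (p : GTNode n) {i j : ℕ}
    (h1 : (p.1.1 : ℕ) = i) (h2 : (p.1.2 : ℕ) = j) : entryR A i j = A p.1 := by
  subst h1 h2
  rw [entryR, dif_pos ⟨p.1.1.isLt, p.1.2.isLt⟩]

/-- each connected component of Γ_v has property A: if it contains (i,j)
and (i,j+1) then i ≥ 1 and it also contains (i+1,j) and (i-1,j+1). -/
theorem statement6 (n : ℕ) (lam : Fin n → ℤ)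
    (hreg : ∀ i j : Fin n, i < j → lam j < lam i)
    (A : GTIdx n → ℝ)
    (hA : A ∈ Set.extremePoints ℝ (GTPoly n (fun i => (lam i : ℝ))))
    (i j : ℕ) (p q : GTNode n)
    (hp1 : (p.1.1 : ℕ) = i) (hp2 : (p.1.2 : ℕ) = j)
    (hq1 : (q.1.1 : ℕ) = i) (hq2 : (q.1.2 : ℕ) = j + 1)
    (hreach : (Gamma n A).Reachable p q) :
    1 ≤ i ∧
    (∃ r : GTNode n, (r.1.1 : ℕ) = i + 1 ∧ (r.1.2 : ℕ) = j ∧ (Gamma n A).Reachable p r) ∧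
    (∃ r : GTNode n, (r.1.1 : ℕ) + 1 = i ∧ (r.1.2 : ℕ) = j + 1 ∧
      (Gamma n A).Reachable p r) := by
  obtain ⟨hmem, -⟩ := hA
  obtain ⟨hA0, hAint, -⟩ := hmem
  have hval : A p.1 = A q.1 := gamma_eq_of_reachable hreach
  have hpv : i + j < n := by
    have := p.2; rw [GTValid, hp1, hp2] at this; exact this
  have hqv : i + (j + 1) < n := by
    have := q.2; rw [GTValid, hq1, hq2] at this; exact this
  have hAp : entryR A i j = A p.1 := entry_node A p hp1 hp2
  have hAq : entryR A i (j + 1) = A q.1 := entry_node A q hq1 hq2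
  have hi1 : 1 ≤ i := by
    by_contra h
    have hi0 : i = 0 := by omega
    subst hi0
    have hj1 : j + 1 < n := by omega
    have hj : j < n := by omega
    have e1 : entryR A 0 ((⟨j, hj⟩ : Fin n) : ℕ) = (lam ⟨j, hj⟩ : ℝ) := hA0 ⟨j, hj⟩
    have e2 : entryR A 0 ((⟨j + 1, hj1⟩ : Fin n) : ℕ) = (lam ⟨j + 1, hj1⟩ : ℝ) := hA0 ⟨j + 1, hj1⟩
    have hlt : lam (⟨j + 1, hj1⟩ : Fin n) < lam ⟨j, hj⟩ :=
      hreg _ _ (by simp [Fin.mk_lt_mk])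
    have : (lam (⟨j, hj⟩ : Fin n) : ℝ) = (lam (⟨j + 1, hj1⟩ : Fin n) : ℝ) := by
      rw [← e1, ← e2]; simp only [Fin.val_mk]
      rw [hAp, hAq, hval]
    exact absurd (Int.cast_injective this) (by omega)
  refine ⟨hi1, ?_, ?_⟩
  · -- node (i+1, j)
    have hv : GTValid n ((⟨i + 1, by omega⟩ : Fin n), (⟨j, by omega⟩ : Fin n)) := by
      rw [GTValid]; simp; omega
    refine ⟨⟨((⟨i + 1, by omega⟩ : Fin n), (⟨j, by omega⟩ : Fin n)), hv⟩, rfl, rfl, ?_⟩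
    set r : GTNode n := ⟨((⟨i + 1, by omega⟩ : Fin n), (⟨j, by omega⟩ : Fin n)), hv⟩
    have hAr : entryR A (i + 1) j = A r.1 := entry_node A r rfl rfl
    have hint := hAint i j (by omega)
    have hvr : A p.1 = A r.1 := by
      rw [← hAr, ← hAp]
      have := hint.1
      have := hint.2
      have : entryR A i (j + 1) = A p.1 := by rw [hAq, hval]
      linarith [hint.1, hint.2]
    have hadj : (Gamma n A).Adj p r := by
      refine ⟨Or.inr ⟨hv, p.2, ?_, Or.inl ?_⟩, hvr⟩
      · simp [hp1, r]
      · simp [hp2, r]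
    exact hadj.reachable
  · -- node (i-1, j+1)
    obtain ⟨i', rfl⟩ : ∃ i', i = i' + 1 := ⟨i - 1, by omega⟩
    have hv : GTValid n ((⟨i', by omega⟩ : Fin n), (⟨j + 1, by omega⟩ : Fin n)) := by
      rw [GTValid]; simp; omega
    refine ⟨⟨((⟨i', by omega⟩ : Fin n), (⟨j + 1, by omega⟩ : Fin n)), hv⟩, rfl, rfl, ?_⟩
    set r : GTNode n := ⟨((⟨i', by omega⟩ : Fin n), (⟨j + 1, by omega⟩ : Fin n)), hv⟩
    have hAr : entryR A i' (j + 1) = A r.1 := entry_node A r rfl rfl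
    have hint1 := hAint i' j (by omega)
    have hint2 := hAint i' (j + 1) (by omega)
    have hvr : A p.1 = A r.1 := by
      rw [← hAr]
      have h1 : entryR A i' (j + 1) ≤ A p.1 := hAp ▸ hint1.2
      have h2 : A p.1 ≤ entryR A i' (j + 1) := by
        rw [hval, ← hAq]; exact hint2.1
      linarith
    have hadj : (Gamma n A).Adj p r := by
      refine ⟨Or.inl ⟨p.2, hv, ?_, Or.inr ?_⟩, hvr⟩
      · simp [hp1, r]
      · simp [hp2, r]
    exact hadj.reachable
end
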